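/- arXiv:0712.4071 — 8 statements merged into one kernel-verified Lean document; each statement's English description precedes it below -/
import Mathlib

section
/- The set D = {E_{-i} + E_i : i ∈ ℤ, i ≥ 0} ∪ {E_{-i} + E_{1+i} : i ∈ ℤ, i ≥ 0} is a basis of E; that is, D is a linearly independent subset of E and D spans E. -/
/-- The basis vector `E_i` of the ℚ-vector space `E = ℤ →₀ ℚ`. -/
noncomputable def Evec (i : ℤ) : ℤ →₀ ℚ := Finsupp.single i 1

/-- The set `D = {E_{-i} + E_i : i ≥ 0} ∪ {E_{-i} + E_{1+i} : i ≥ 0}`. -/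
def Dset : Set (ℤ →₀ ℚ) :=
  {x | ∃ i : ℤ, 0 ≤ i ∧ x = Evec (-i) + Evec i} ∪
  {x | ∃ i : ℤ, 0 ≤ i ∧ x = Evec (-i) + Evec (1 + i)}

/-- Enumeration of `Dset` by the integers. -/
noncomputable def vv (n : ℤ) : ℤ →₀ ℚ :=
  Evec (-n) + Evec (if 0 ≤ n then n else n + 1)

lemma range_vv : Set.range vv = Dset := by
  ext x
  constructor
  · rintro ⟨n, rfl⟩
    by_cases h : 0 ≤ n
    · left; exact ⟨n, h, by simp [vv, h]⟩
    · right
      refine ⟨-n - 1, by omega, ?_⟩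
      have h1 : -(-n - 1) = n + 1 := by ring
      have h2 : 1 + (-n - 1) = -n := by ring
      rw [h1, h2, add_comm]
      simp [vv, h]
  · rintro (⟨i, hi, rfl⟩ | ⟨i, hi, rfl⟩)
    · exact ⟨i, by simp [vv, hi]⟩
    · refine ⟨-(i + 1), ?_⟩
      have h : ¬ (0 : ℤ) ≤ -(i + 1) := by omega
      have h1 : -(-(i + 1)) = 1 + i := by ring
      have h2 : -(i + 1) + 1 = -i := by ring
      rw [vv, h1, if_neg h, h2, add_comm]

lemma vv_apply (i q : ℤ) :
    vv i q = (if -i = q then (1 : ℚ) else 0) +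
      (if (if 0 ≤ i then i else i + 1) = q then (1 : ℚ) else 0) := by
  simp [vv, Evec, Finsupp.single_apply]

lemma li_vv : LinearIndependent ℚ vv := by
  rw [linearIndependent_iff']
  intro s
  induction s using Finset.strongInduction with
  | _ s ih =>
    intro g hsum i hi
    -- pick element of maximal height
    have hne : s.Nonempty := ⟨i, hi⟩
    obtain ⟨n, hn, hmax⟩ := s.exists_max_image
      (fun m => if 0 ≤ m then 2 * m else -2 * m - 1) hne
    -- evaluate the sum at -n
    have h0 := congrArg (fun f : ℤ →₀ ℚ => f (-n)) hsum
    simp only [Finsupp.finset_sum_apply, Finsupp.smul_apply, Finsupp.coe_zero,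
      Pi.zero_apply, smul_eq_mul] at h0
    have hzero : ∀ b ∈ s, b ≠ n → g b * vv b (-n) = 0 := by
      intro b hb hbn
      have hb' := hmax b hb
      have : vv b (-n) = 0 := by
        have h1 : ¬ (-b = -n) := by omega
        have h2 : ¬ (if 0 ≤ b then b else b + 1) = -n := by
          by_cases hb0 : 0 ≤ b <;> by_cases hn0 : 0 ≤ n <;>
            simp only [hb0, hn0, if_true, if_false] at hb' ⊢ <;> omega
        rw [vv_apply, if_neg h1, if_neg h2, add_zero]
      rw [this, mul_zero]
    rw [Finset.sum_eq_single n hzero (fun h => absurd hn h)] at h0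
    have hvnn : vv n (-n) ≠ 0 := by
      rw [vv_apply, if_pos rfl]
      split <;> split <;> norm_num
    have hgn : g n = 0 := by
      rcases mul_eq_zero.mp h0 with h | h
      · exact h
      · exact absurd h hvnn
    -- now the rest of the sum vanishes; recurse on the erased set
    have hsum' : ∑ j ∈ s.erase n, g j • vv j = 0 := by
      rw [Finset.sum_erase s (by rw [hgn, zero_smul])]
      exact hsum
    by_cases hin : i = n
    · rw [hin]; exact hgn
    · exact ih (s.erase n) (Finset.erase_ssubset hn) g hsum' i
        (Finset.mem_erase.mpr ⟨hin, hi⟩)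

lemma vv_mem_span (n : ℤ) : vv n ∈ Submodule.span ℚ Dset :=
  Submodule.subset_span (range_vv ▸ Set.mem_range_self n)

lemma evec_mem_span (k : ℤ) : Evec k ∈ Submodule.span ℚ Dset := by
  suffices H : ∀ N : ℕ, ∀ k : ℤ,
      2 * k.natAbs + (if k < 0 then 1 else 0) ≤ N → Evec k ∈ Submodule.span ℚ Dset from
    H _ k le_rfl
  intro N
  induction N with
  | zero =>
    intro k hk
    have hk0 : k = 0 := by by_cases h : k < 0 <;> simp [h] at hk <;> omega
    subst hk0
    have : Evec 0 = (2⁻¹ : ℚ) • vv 0 := by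
      rw [vv, if_pos le_rfl, neg_zero]
      module
    rw [this]
    exact Submodule.smul_mem _ _ (vv_mem_span 0)
  | succ N ih =>
    intro k hk
    rcases lt_trichotomy k 0 with h | h | h
    · -- k < 0 : vv (-k) = Evec k + Evec (-k)
      have hv : vv (-k) = Evec k + Evec (-k) := by
        rw [vv, if_pos (by omega : (0:ℤ) ≤ -k), neg_neg]
      have : Evec k = vv (-k) - Evec (-k) := by rw [hv, add_sub_cancel_right]
      rw [this]
      refine Submodule.sub_mem _ (vv_mem_span _) (ih (-k) ?_)
      rw [if_pos h] at hk
      rw [if_neg (by omega : ¬ (-k < 0))]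
      omega
    · subst h
      have : Evec 0 = (2⁻¹ : ℚ) • vv 0 := by
        rw [vv, if_pos le_rfl, neg_zero]
        module
      rw [this]
      exact Submodule.smul_mem _ _ (vv_mem_span 0)
    · -- k > 0 : vv (-k) = Evec k + Evec (1 - k)
      have hv : vv (-k) = Evec k + Evec (-k + 1) := by
        rw [vv, if_neg (by omega : ¬ (0:ℤ) ≤ -k), neg_neg]
      have : Evec k = vv (-k) - Evec (-k + 1) := by rw [hv, add_sub_cancel_right]
      rw [this]
      refine Submodule.sub_mem _ (vv_mem_span _) (ih (-k + 1) ?_)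
      rw [if_neg (by omega : ¬ (k < 0))] at hk
      by_cases h2 : -k + 1 < 0
      · rw [if_pos h2]; omega
      · rw [if_neg h2]; omega

lemma span_Dset_top : Submodule.span ℚ Dset = ⊤ := by
  rw [eq_top_iff]
  rintro x -
  have hx : x = ∑ a ∈ x.support, x a • Evec a := by
    conv_lhs => rw [← Finsupp.sum_single x]
    rw [Finsupp.sum]
    refine Finset.sum_congr rfl fun a _ => ?_
    rw [Evec, Finsupp.smul_single]
    norm_num
  rw [hx]
  exact Submodule.sum_mem _ fun a _ => Submodule.smul_mem _ _ (evec_mem_span a)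

/-- The set `D` is a basis of `E`: it is linearly independent and spans `E`. -/
theorem stmt_0 :
    LinearIndependent ℚ (fun v : Dset => (v : ℤ →₀ ℚ)) ∧
    Submodule.span ℚ Dset = ⊤ := by
  refine ⟨?_, span_Dset_top⟩
  have h : LinearIndependent ℚ (fun v : Set.range vv => (v : ℤ →₀ ℚ)) := li_vv.linearIndepOn_id
  exact range_vv ▸ h
end

section
/- For every n ∈ ℤ and every k ∈ O, the set B^n_{k,k} is linearly independent and spans X^n_{k,k}; that is, B^n_{k,k} is a basis of X^n_{k,k}. -/
/-- The type of odd integers. -/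
abbrev OddZ : Type := {k : ℤ // Odd k}

/-- The ℚ-vector space `X` with basis indexed by `(a, b, k, l)`, `a, b ∈ ℤ`, `k, l` odd. -/
abbrev XSp : Type := (ℤ × ℤ × OddZ × OddZ) →₀ ℚ

/-- The basis vector `X^{a,b}_{k,l}`. -/
noncomputable def Xb (a b : ℤ) (k l : OddZ) : XSp := Finsupp.single (a, b, k, l) 1

/-- The subspace `X^n_{k,l}` spanned by all `X^{a,b}_{k,l}` and `X^{a,b}_{l,k}` with `a + b = n`. -/
noncomputable def Xsub (n : ℤ) (k l : OddZ) : Submodule ℚ XSp :=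
  Submodule.span ℚ {x | ∃ a b : ℤ, a + b = n ∧ (x = Xb a b k l ∨ x = Xb a b l k)}

/-- The set `B^n_{k,l} = {X^{a,b}_{k,l} + X^{b,a}_{l,k} : a + b = n} ∪
{X^{a,b+1}_{k,l} + X^{b,a+1}_{l,k} : a + b = n - 1}`. -/
def Bset (n : ℤ) (k l : OddZ) : Set XSp :=
  {x | ∃ a b : ℤ, a + b = n ∧ x = Xb a b k l + Xb b a l k} ∪
  {x | ∃ a b : ℤ, a + b = n - 1 ∧ x = Xb a (b + 1) k l + Xb b (a + 1) l k}

noncomputable def ee (n : ℤ) (k : OddZ) : ℤ → XSp := fun p => Xb p (n - p) k k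

lemma ee_apply (n : ℤ) (k : OddZ) (p t : ℤ) :
    (ee n k p) (t, n - t, k, k) = if p = t then 1 else 0 := by
  rcases eq_or_ne p t with rfl | h
  · simp [ee, Xb]
  · simp only [ee, Xb, if_neg h]
    exact Finsupp.single_eq_of_ne (by simp [Prod.ext_iff, h, Ne.symm h])

lemma ee_mem_left (n : ℤ) (k : OddZ) (p q : ℤ) (hpq : p + q = n) :
    ee n k p + ee n k q ∈ Bset n k k := by
  refine Or.inl ⟨p, q, hpq, ?_⟩
  have h1 : n - p = q := by omega
  have h2 : n - q = p := by omega
  simp [ee, h1, h2]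

lemma ee_mem_right (n : ℤ) (k : OddZ) (p q : ℤ) (hpq : p + q = n - 1) :
    ee n k p + ee n k q ∈ Bset n k k := by
  refine Or.inr ⟨p, q, hpq, ?_⟩
  have h1 : n - p = q + 1 := by omega
  have h2 : n - q = p + 1 := by omega
  simp [ee, h1, h2]

noncomputable def gg (n : ℤ) (k : OddZ) (u : ℕ → ℤ) : ℕ → XSp :=
  fun j => ee n k (u (j - 1)) + ee n k (u j)

lemma main_aux (n : ℤ) (k : OddZ) (u : ℕ → ℤ)
    (huinj : Function.Injective u) (husurj : Function.Surjective u)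
    (h00 : u 0 + u 0 = n ∨ u 0 + u 0 = n - 1)
    (hstep : ∀ j, u j + u (j + 1) = n ∨ u j + u (j + 1) = n - 1)
    (halt : ∀ j, u j + u (j + 1) ≠ u (j + 1) + u (j + 2))
    (h01 : u 0 + u 0 ≠ u 0 + u 1) :
    LinearIndependent ℚ (fun v : Bset n k k => (v : XSp)) ∧
      Submodule.span ℚ (Bset n k k) = Xsub n k k := by
  set e : ℤ → XSp := ee n k with he
  set g : ℕ → XSp := gg n k u with hg
  have hg0 : g 0 = e (u 0) + e (u 0) := rfl
  have hgs : ∀ j : ℕ, g (j + 1) = e (u j) + e (u (j + 1)) := fun j => rfl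
  -- every g j is in Bset
  have hgB : ∀ j, g j ∈ Bset n k k := by
    intro j
    cases j with
    | zero =>
      rw [hg0]
      rcases h00 with h | h
      · exact ee_mem_left n k _ _ h
      · exact ee_mem_right n k _ _ h
    | succ j =>
      rw [hgs]
      rcases hstep j with h | h
      · exact ee_mem_left n k _ _ h
      · exact ee_mem_right n k _ _ h
  -- every element of Bset is some g j
  have pair_exists : ∀ p q : ℤ, (p + q = n ∨ p + q = n - 1) → ∃ j, g j = e p + e q := by
    intro p q hpq
    obtain ⟨i, rfl⟩ := husurj p
    cases i with
    | zero =>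
      rcases eq_or_ne (u 0 + q) (u 0 + u 0) with h | h
      · have hq : q = u 0 := by omega
        exact ⟨0, by rw [hg0, hq]⟩
      · have h1 : u 0 + u 1 = n ∨ u 0 + u 1 = n - 1 := hstep 0
        have hq : q = u 1 := by omega
        have hgs1 : g 1 = e (u 0) + e (u 1) := hgs 0
        exact ⟨1, by rw [hgs1, hq]⟩
    | succ i =>
      have hA : u i + u (i + 1) = n ∨ u i + u (i + 1) = n - 1 := hstep i
      have hB : u (i + 1) + u (i + 2) = n ∨ u (i + 1) + u (i + 2) = n - 1 := hstep (i + 1)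
      have hC : u i + u (i + 1) ≠ u (i + 1) + u (i + 2) := halt i
      rcases eq_or_ne (u (i + 1) + q) (u i + u (i + 1)) with h | h
      · have hq : q = u i := by omega
        have hgsi : g (i + 1) = e (u i) + e (u (i + 1)) := hgs i
        exact ⟨i + 1, by rw [hgsi, hq, add_comm]⟩
      · have hq : q = u (i + 2) := by omega
        have hgsi : g (i + 2) = e (u (i + 1)) + e (u (i + 2)) := hgs (i + 1)
        exact ⟨i + 2, by rw [hgsi, hq]⟩
  have hBr : Bset n k k = Set.range g := by
    apply Set.Subset.antisymm
    · rintro x (⟨a, b, hab, rfl⟩ | ⟨a, b, hab, rfl⟩)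
      · obtain ⟨j, hj⟩ := pair_exists a b (Or.inl hab)
        refine ⟨j, ?_⟩
        rw [hj]
        have h1 : n - a = b := by omega
        have h2 : n - b = a := by omega
        simp [he, ee, h1, h2]
      · obtain ⟨j, hj⟩ := pair_exists a b (Or.inr hab)
        refine ⟨j, ?_⟩
        rw [hj]
        have h1 : n - a = b + 1 := by omega
        have h2 : n - b = a + 1 := by omega
        simp [he, ee, h1, h2]
    · rintro x ⟨j, rfl⟩
      exact hgB j
  -- coordinate computations
  have e_apply_u : ∀ a i : ℕ, (e (u a)) (u i, n - u i, k, k) = if a = i then 1 else 0 := by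
    intro a i
    rw [he, ee_apply]
    rcases eq_or_ne a i with rfl | h
    · simp
    · rw [if_neg (fun hh => h (huinj hh)), if_neg h]
  have gapply_succ : ∀ j i : ℕ,
      (g j) (u (i + 1), n - u (i + 1), k, k) =
        (if j = i + 2 then 1 else 0) + (if j = i + 1 then 1 else 0) := by
    intro j i
    cases j with
    | zero =>
      simp only [hg0, Finsupp.add_apply, e_apply_u]
      split_ifs <;> first | contradiction | (exfalso; omega) | norm_num
    | succ j =>
      simp only [hgs, Finsupp.add_apply, e_apply_u]
      split_ifs <;> first | contradiction | (exfalso; omega) | norm_num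
  have gapply_zero : ∀ j : ℕ,
      (g j) (u 0, n - u 0, k, k) = (if j = 0 then 2 else 0) + (if j = 1 then 1 else 0) := by
    intro j
    cases j with
    | zero =>
      simp only [hg0, Finsupp.add_apply, e_apply_u]
      split_ifs <;> first | contradiction | (exfalso; omega) | norm_num
    | succ j =>
      simp only [hgs, Finsupp.add_apply, e_apply_u]
      split_ifs <;> first | contradiction | (exfalso; omega) | norm_num
  -- linear independence of g
  have hgind : LinearIndependent ℚ g := by
    rw [linearIndependent_iff']
    intro s f hsum i hi
    set l : ℕ → ℚ := fun j => if j ∈ s then f j else 0 with hl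
    have coord : ∀ t : ℤ, ∑ j ∈ s, f j * (g j) (t, n - t, k, k) = 0 := by
      intro t
      have := congrFun (congrArg DFunLike.coe hsum) (t, n - t, k, k)
      rw [Finset.sum_apply'] at this
      simpa [Finsupp.smul_apply, smul_eq_mul] using this
    have eq_succ : ∀ i : ℕ, l (i + 2) + l (i + 1) = 0 := by
      intro i
      have h := coord (u (i + 1))
      simp only [gapply_succ, mul_add, mul_ite, mul_one, mul_zero,
        Finset.sum_add_distrib, Finset.sum_ite_eq'] at h
      simpa [hl] using h
    have eq_zero : 2 * l 0 + l 1 = 0 := by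
      have h := coord (u 0)
      simp only [gapply_zero, mul_add, mul_ite, mul_one, mul_zero,
        Finset.sum_add_distrib, Finset.sum_ite_eq'] at h
      have h0 : (if (0 : ℕ) ∈ s then f 0 * 2 else 0) = l 0 * 2 := by
        by_cases hh : (0 : ℕ) ∈ s <;> simp [hl, hh]
      rw [h0] at h
      have h1 : (if (1 : ℕ) ∈ s then f 1 else 0) = l 1 := by
        by_cases hh : (1 : ℕ) ∈ s <;> simp [hl, hh]
      rw [h1] at h
      linarith
    have decay : ∀ d i : ℕ, l (i + 1) = (-1 : ℚ) ^ d * l (i + 1 + d) := by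
      intro d
      induction d with
      | zero => intro i; simp
      | succ d ih =>
        intro i
        have h1 : l (i + 1) = -l (i + 2) := by have := eq_succ i; linarith
        have h2 := ih (i + 1)
        rw [h1, h2, show i + 1 + 1 + d = i + 1 + (d + 1) by omega]
        ring
    have lzero : ∀ j, l j = 0 := by
      have hhigh : ∀ j, s.sup id < j → l j = 0 := by
        intro j hj
        have hns : j ∉ s := by
          intro hmem
          have h := Finset.le_sup (f := id) hmem
          simp only [id] at h
          omega
        simp [hl, hns]
      have hpos : ∀ i : ℕ, l (i + 1) = 0 := by
        intro i
        have h := decay (s.sup id + 1) i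
        rw [hhigh (i + 1 + (s.sup id + 1)) (by omega)] at h
        simpa using h
      intro j
      cases j with
      | zero =>
        have := eq_zero
        rw [hpos 0] at this
        linarith
      | succ j => exact hpos j
    have hli : l i = f i := by simp [hl, hi]
    rw [← hli]
    exact lzero i
  constructor
  · rw [hBr]
    exact LinearIndependent.linearIndepOn_id hgind
  · -- span
    have he_span : ∀ t : ℤ, e t ∈ Submodule.span ℚ (Bset n k k) := by
      have hu : ∀ i : ℕ, e (u i) ∈ Submodule.span ℚ (Bset n k k) := by
        intro i
        induction i with
        | zero =>
          have hg0mem : g 0 ∈ Submodule.span ℚ (Bset n k k) :=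
            Submodule.subset_span (hgB 0)
          have : e (u 0) = (2⁻¹ : ℚ) • g 0 := by
            rw [hg0, smul_add]
            rw [← add_smul]
            norm_num
          rw [this]
          exact Submodule.smul_mem _ _ hg0mem
        | succ i ih =>
          have hgmem : g (i + 1) ∈ Submodule.span ℚ (Bset n k k) :=
            Submodule.subset_span (hgB (i + 1))
          have : e (u (i + 1)) = g (i + 1) - e (u i) := by
            rw [hgs]; abel
          rw [this]
          exact Submodule.sub_mem _ hgmem ih
      intro t
      obtain ⟨i, rfl⟩ := husurj t
      exact hu i
    apply le_antisymm
    · rw [Submodule.span_le]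
      rintro x (⟨a, b, hab, rfl⟩ | ⟨a, b, hab, rfl⟩)
      · exact Submodule.add_mem _
          (Submodule.subset_span ⟨a, b, hab, Or.inl rfl⟩)
          (Submodule.subset_span ⟨b, a, by omega, Or.inl rfl⟩)
      · exact Submodule.add_mem _
          (Submodule.subset_span ⟨a, b + 1, by omega, Or.inl rfl⟩)
          (Submodule.subset_span ⟨b, a + 1, by omega, Or.inl rfl⟩)
    · rw [Xsub, Submodule.span_le]
      rintro x ⟨a, b, hab, hx | hx⟩ <;>
      · subst hx
        have : Xb a b k k = e a := by rw [he, ee, show n - a = b by omega]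
        rw [this]
        exact he_span a

def vfun : ℕ → ℤ := fun j =>
  if j % 2 = 0 then ((j / 2 : ℕ) : ℤ) else -(((j / 2 : ℕ) : ℤ) + 1)

lemma vfun_inj : Function.Injective vfun := by
  intro a b h
  simp only [vfun] at h
  split_ifs at h <;> omega

lemma vfun_surj : Function.Surjective vfun := by
  intro t
  refine ⟨if 0 ≤ t then 2 * t.toNat else 2 * (-t - 1).toNat + 1, ?_⟩
  simp only [vfun]
  split_ifs <;> omega

lemma vfun_sum2 (j : ℕ) :
    (vfun j + vfun (j + 1) = -1 ∧ vfun (j + 1) + vfun (j + 2) = 0) ∨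
    (vfun j + vfun (j + 1) = 0 ∧ vfun (j + 1) + vfun (j + 2) = -1) := by
  simp only [vfun]
  split_ifs <;> omega

lemma vfun0 : vfun 0 = 0 := rfl
lemma vfun1 : vfun 1 = -1 := rfl

def uE (m : ℤ) : ℕ → ℤ := fun j => m + vfun j
def uO (m : ℤ) : ℕ → ℤ := fun j => m - vfun j

/-- For every `n ∈ ℤ` and odd `k`, the set `B^n_{k,k}` is a basis of `X^n_{k,k}`:
it is linearly independent and spans `X^n_{k,k}`. -/
theorem stmt_2 (n : ℤ) (k : OddZ) :
    LinearIndependent ℚ (fun v : Bset n k k => (v : XSp)) ∧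
    Submodule.span ℚ (Bset n k k) = Xsub n k k := by
  rcases Int.even_or_odd n with ⟨m, hm⟩ | ⟨m, hm⟩
  · -- n = m + m
    refine main_aux n k (uE m) ?_ ?_ ?_ ?_ ?_ ?_
    · intro a b h
      simp only [uE] at h
      exact vfun_inj (by omega : vfun a = vfun b)
    · intro t
      obtain ⟨j, hj⟩ := vfun_surj (t - m)
      exact ⟨j, by simp only [uE]; omega⟩
    · simp only [uE]
      have h0 := vfun0
      left; omega
    · intro j
      simp only [uE]
      rcases vfun_sum2 j with ⟨h1, _⟩ | ⟨h1, _⟩ <;> omega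
    · intro j
      simp only [uE]
      rcases vfun_sum2 j with ⟨h1, h2⟩ | ⟨h1, h2⟩ <;> omega
    · simp only [uE]
      have h0 := vfun0
      have h1 := vfun1
      omega
  · -- n = 2 * m + 1
    refine main_aux n k (uO m) ?_ ?_ ?_ ?_ ?_ ?_
    · intro a b h
      simp only [uO] at h
      exact vfun_inj (by omega : vfun a = vfun b)
    · intro t
      obtain ⟨j, hj⟩ := vfun_surj (m - t)
      exact ⟨j, by simp only [uO]; omega⟩
    · simp only [uO]
      have h0 := vfun0
      right; omega
    · intro j
      simp only [uO]
      rcases vfun_sum2 j with ⟨h1, _⟩ | ⟨h1, _⟩ <;> omega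
    · intro j
      simp only [uO]
      rcases vfun_sum2 j with ⟨h1, h2⟩ | ⟨h1, h2⟩ <;> omega
    · simp only [uO]
      have h0 := vfun0
      have h1 := vfun1
      omega
end

section
/- For every n ∈ ℤ and all k, l ∈ O with k < l, the set B^n_{k,l} is linearly independent, its span is contained in X^n_{k,l}, and the span of B^n_{k,l} has codimension 1 in X^n_{k,l}; that is, the quotient space X^n_{k,l} / span(B^n_{k,l}) is one-dimensional over ℚ. -/
namespace Stmt3Aux

/-- Explicit enumeration of the elements of `Bset`. -/
noncomputable def idx (n : ℤ) (k l : OddZ) : ℤ ⊕ ℤ → XSp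
  | Sum.inl a => Xb a (n - a) k l + Xb (n - a) a l k
  | Sum.inr a => Xb a (n - a) k l + Xb (n - 1 - a) (a + 1) l k

lemma range_idx (n : ℤ) (k l : OddZ) : Set.range (idx n k l) = Bset n k l := by
  ext x
  constructor
  · rintro ⟨i, rfl⟩
    cases i with
    | inl a => exact Or.inl ⟨a, n - a, by ring, rfl⟩
    | inr a =>
      refine Or.inr ⟨a, n - 1 - a, by ring, ?_⟩
      have h : n - 1 - a + 1 = n - a := by ring
      rw [h]; rfl
  · rintro (⟨a, b, hab, rfl⟩ | ⟨a, b, hab, rfl⟩)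
    · obtain rfl : b = n - a := by omega
      exact ⟨Sum.inl a, rfl⟩
    · obtain rfl : b = n - 1 - a := by omega
      refine ⟨Sum.inr a, ?_⟩
      have h : n - 1 - a + 1 = n - a := by ring
      simp only [idx, h]

lemma idx_mem (n : ℤ) (k l : OddZ) (i : ℤ ⊕ ℤ) : idx n k l i ∈ Bset n k l := by
  rw [← range_idx]; exact ⟨i, rfl⟩

lemma Xb_apply (a b : ℤ) (k' l' : OddZ) (p : ℤ × ℤ × OddZ × OddZ) :
    Xb a b k' l' p = if (a, b, k', l') = p then 1 else 0 := Finsupp.single_apply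

lemma idx_apply_p (n : ℤ) (k l : OddZ) (hne : k ≠ l) (i : ℤ ⊕ ℤ) (a : ℤ) :
    idx n k l i (a, n - a, k, l) =
      (if i = Sum.inl a then 1 else 0) + (if i = Sum.inr a then 1 else 0) := by
  have hlk : ¬ (l = k) := fun h => hne h.symm
  have hkl' : ¬ (k = l) := hne
  cases i with
  | inl a' =>
    simp only [idx, Finsupp.add_apply, Xb_apply, Prod.mk.injEq, hlk, hkl', and_false,
      false_and, if_false, sub_right_inj, and_true, and_self, Sum.inl.injEq,
      reduceCtorEq, add_zero, zero_add]
  | inr a' =>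
    simp only [idx, Finsupp.add_apply, Xb_apply, Prod.mk.injEq, hlk, hkl', and_false,
      false_and, if_false, sub_right_inj, and_true, and_self, Sum.inr.injEq,
      reduceCtorEq, add_zero, zero_add]

lemma idx_apply_q (n : ℤ) (k l : OddZ) (hne : k ≠ l) (i : ℤ ⊕ ℤ) (c : ℤ) :
    idx n k l i (n - c, c, l, k) =
      (if i = Sum.inl c then 1 else 0) + (if i = Sum.inr (c - 1) then 1 else 0) := by
  have hlk : ¬ (l = k) := fun h => hne h.symm
  have hkl' : ¬ (k = l) := hne
  cases i with
  | inl a' =>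
    simp only [idx, Finsupp.add_apply, Xb_apply, Prod.mk.injEq, hlk, hkl', and_false,
      false_and, if_false, sub_right_inj, and_true, and_self, Sum.inl.injEq,
      reduceCtorEq, add_zero, zero_add]
  | inr a' =>
    simp only [idx, Finsupp.add_apply, Xb_apply, Prod.mk.injEq, hlk, hkl', and_false,
      false_and, if_false, and_true, Sum.inr.injEq, reduceCtorEq, add_zero, zero_add]
    by_cases h : a' = c - 1
    · subst h
      rw [if_pos (by constructor <;> omega), if_pos rfl]
    · rw [if_neg (by omega), if_neg h]

lemma sum_ite_one (f : ℤ ⊕ ℤ →₀ ℚ) (j : ℤ ⊕ ℤ) :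
    (f.sum fun i c => c * (if i = j then (1:ℚ) else 0)) = f j := by
  classical
  have : (fun (i : ℤ ⊕ ℤ) (c : ℚ) => c * (if i = j then (1:ℚ) else 0)) =
      fun i c => if i = j then c else 0 := by
    funext i c; split <;> simp
  rw [this, Finsupp.sum_ite_self_eq']

lemma li_idx (n : ℤ) (k l : OddZ) (hne : k ≠ l) : LinearIndependent ℚ (idx n k l) := by
  rw [linearIndependent_iff]
  intro f hf
  have hval : ∀ p : ℤ × ℤ × OddZ × OddZ, (f.sum fun i c => c * (idx n k l i p)) = 0 := by
    intro p
    have h := congrArg (fun g : XSp => g p) hf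
    simpa [Finsupp.linearCombination_apply, Finsupp.sum_apply, Finsupp.smul_apply,
      smul_eq_mul] using h
  have hE : ∀ a : ℤ, f (Sum.inl a) + f (Sum.inr a) = 0 := by
    intro a
    have h := hval (a, n - a, k, l)
    simp only [idx_apply_p n k l hne, mul_add] at h
    rwa [Finsupp.sum_add, sum_ite_one, sum_ite_one] at h
  have hF : ∀ c : ℤ, f (Sum.inl c) + f (Sum.inr (c - 1)) = 0 := by
    intro c
    have h := hval (n - c, c, l, k)
    simp only [idx_apply_q n k l hne, mul_add] at h
    rwa [Finsupp.sum_add, sum_ite_one, sum_ite_one] at h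
  have hshift : ∀ a : ℤ, f (Sum.inr a) = f (Sum.inr (a - 1)) := by
    intro a
    have h1 := hE a
    have h2 := hF a
    linarith
  have hconst : ∀ a : ℤ, f (Sum.inr a) = f (Sum.inr 0) := by
    intro a
    induction a using Int.induction_on with
    | zero => rfl
    | succ i ih =>
      have h := hshift ((i : ℤ) + 1)
      rw [show ((i:ℤ) + 1 - 1) = (i:ℤ) by ring] at h
      rw [h]; exact ih
    | pred i ih =>
      have h := hshift (-(i:ℤ))
      rw [← h]; exact ih
  have hz : f (Sum.inr 0) = 0 := by
    by_contra hne0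
    have hsub : Set.range (Sum.inr : ℤ → ℤ ⊕ ℤ) ⊆ ↑f.support := by
      rintro _ ⟨a, rfl⟩
      simp only [Finset.mem_coe, Finsupp.mem_support_iff]
      rw [hconst a]; exact hne0
    exact (Set.infinite_range_of_injective Sum.inr_injective).mono hsub f.support.finite_toSet
  ext i
  cases i with
  | inl a => have := hE a; rw [hconst a, hz] at this; simpa using this
  | inr a => rw [hconst a, hz]; rfl

/-- The functional `φ` taking value `1` on `X^{a,b}_{k,l}` and `-1` on `X^{a,b}_{l,k}`. -/
noncomputable def phi (k l : OddZ) : XSp →ₗ[ℚ] ℚ :=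
  Finsupp.linearCombination ℚ (fun p : ℤ × ℤ × OddZ × OddZ =>
    if p.2.2 = (k, l) then (1:ℚ) else if p.2.2 = (l, k) then -1 else 0)

lemma phi_Xb (k l k' l' : OddZ) (a b : ℤ) :
    phi k l (Xb a b k' l') =
      if (k', l') = (k, l) then (1:ℚ) else if (k', l') = (l, k) then -1 else 0 := by
  simp [phi, Xb, Finsupp.linearCombination_single]

lemma phi_Bset (n : ℤ) (k l : OddZ) (hne : k ≠ l) (x : XSp) (hx : x ∈ Bset n k l) :
    phi k l x = 0 := by
  have hcond : ((l, k) : OddZ × OddZ) ≠ (k, l) := by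
    intro h; exact hne (congrArg Prod.snd h)
  rcases hx with ⟨a, b, hab, rfl⟩ | ⟨a, b, hab, rfl⟩ <;>
    simp [phi_Xb, hcond]

end Stmt3Aux

open Stmt3Aux in
/-- For `k < l`, `B^n_{k,l}` is linearly independent, its span is contained in `X^n_{k,l}`,
and the quotient `X^n_{k,l} / span(B^n_{k,l})` is one-dimensional over ℚ. -/
theorem stmt_3 (n : ℤ) (k l : OddZ) (hkl : (k : ℤ) < (l : ℤ)) :
    LinearIndependent ℚ (fun v : Bset n k l => (v : XSp)) ∧
    Submodule.span ℚ (Bset n k l) ≤ Xsub n k l ∧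
    Module.rank ℚ
      (↥(Xsub n k l) ⧸ (Submodule.span ℚ (Bset n k l)).comap (Xsub n k l).subtype) = 1 := by
  have hne : k ≠ l := fun h => absurd (congrArg Subtype.val h) (ne_of_lt hkl)
  -- Part 1: linear independence
  have part1 : LinearIndependent ℚ (fun v : Bset n k l => (v : XSp)) := by
    have h := (li_idx n k l hne).linearIndepOn_id
    rw [range_idx] at h
    exact h
  -- Part 2: span ≤ Xsub
  have part2 : Submodule.span ℚ (Bset n k l) ≤ Xsub n k l := by
    rw [Submodule.span_le]
    rintro x (⟨a, b, hab, rfl⟩ | ⟨a, b, hab, rfl⟩)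
    · exact Submodule.add_mem _
        (Submodule.subset_span ⟨a, b, hab, Or.inl rfl⟩)
        (Submodule.subset_span ⟨b, a, by omega, Or.inr rfl⟩)
    · exact Submodule.add_mem _
        (Submodule.subset_span ⟨a, b + 1, by omega, Or.inl rfl⟩)
        (Submodule.subset_span ⟨b, a + 1, by omega, Or.inr rfl⟩)
  refine ⟨part1, part2, ?_⟩
  -- Part 3: the quotient has dimension one
  set e0 : XSp := Xb 0 n k l with he0def
  have he0 : e0 ∈ Xsub n k l :=
    Submodule.subset_span ⟨0, n, by ring, Or.inl rfl⟩
  set S : Submodule ℚ XSp := Submodule.span ℚ (Bset n k l) ⊔ (ℚ ∙ e0) with hSdef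
  have hBS : ∀ i, idx n k l i ∈ S := fun i =>
    le_sup_left (α := Submodule ℚ XSp) (Submodule.subset_span (idx_mem n k l i))
  have he0S : e0 ∈ S := le_sup_right (α := Submodule ℚ XSp) (Submodule.mem_span_singleton_self e0)
  -- every basis vector of Xsub lies in S
  have claim_e : ∀ a : ℤ, Xb a (n - a) k l ∈ S := by
    have hup : ∀ a : ℤ, Xb a (n - a) k l ∈ S → Xb (a + 1) (n - (a + 1)) k l ∈ S := by
      intro a ha
      have hiden : Xb (a + 1) (n - (a + 1)) k l =
          Xb a (n - a) k l + idx n k l (Sum.inl (a + 1)) - idx n k l (Sum.inr a) := by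
        simp only [idx]
        rw [show n - (a + 1) = n - 1 - a by ring]
        abel
      rw [hiden]
      exact Submodule.sub_mem _ (Submodule.add_mem _ ha (hBS _)) (hBS _)
    have hdown : ∀ a : ℤ, Xb a (n - a) k l ∈ S → Xb (a - 1) (n - (a - 1)) k l ∈ S := by
      intro a ha
      have hiden : Xb (a - 1) (n - (a - 1)) k l =
          Xb a (n - a) k l - idx n k l (Sum.inl a) + idx n k l (Sum.inr (a - 1)) := by
        simp only [idx]
        rw [show n - 1 - (a - 1) = n - a by ring, show a - 1 + 1 = a by ring]
        abel
      rw [hiden]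
      exact Submodule.add_mem _ (Submodule.sub_mem _ ha (hBS _)) (hBS _)
    intro a
    induction a using Int.induction_on with
    | zero => rw [show n - (0:ℤ) = n by ring]; exact he0S
    | succ i ih => exact hup i ih
    | pred i ih => exact hdown (-(i:ℤ)) ih
  have claim_f : ∀ c : ℤ, Xb (n - c) c l k ∈ S := by
    intro c
    have hiden : Xb (n - c) c l k = idx n k l (Sum.inl c) - Xb c (n - c) k l := by
      simp only [idx]; abel
    rw [hiden]
    exact Submodule.sub_mem _ (hBS _) (claim_e c)
  have hXS : Xsub n k l ≤ S := by
    rw [Xsub, Submodule.span_le]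
    rintro x ⟨a, b, hab, (rfl | rfl)⟩
    · obtain rfl : b = n - a := by omega
      exact claim_e a
    · obtain rfl : a = n - b := by omega
      exact claim_f b
  -- the image of e0 in the quotient
  set p : Submodule ℚ (Xsub n k l) :=
    (Submodule.span ℚ (Bset n k l)).comap (Xsub n k l).subtype with hpdef
  set w := Submodule.Quotient.mk (p := p) ⟨e0, he0⟩ with hwdef
  have hkerphi : Submodule.span ℚ (Bset n k l) ≤ LinearMap.ker (phi k l) := by
    rw [Submodule.span_le]
    intro x hx
    exact phi_Bset n k l hne x hx
  have hw0 : w ≠ 0 := by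
    intro h
    rw [hwdef, Submodule.Quotient.mk_eq_zero] at h
    have : phi k l e0 = 0 := hkerphi h
    rw [he0def, phi_Xb] at this
    simp at this
  have hwspan : ∀ q : (↥(Xsub n k l) ⧸ p), ∃ c : ℚ, c • w = q := by
    intro q
    obtain ⟨⟨x, hx⟩, rfl⟩ := Submodule.Quotient.mk_surjective p q
    have hxS : x ∈ S := hXS hx
    rw [hSdef, Submodule.mem_sup] at hxS
    obtain ⟨y, hy, z, hz, rfl⟩ := hxS
    rw [Submodule.mem_span_singleton] at hz
    obtain ⟨c, rfl⟩ := hz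
    refine ⟨c, ?_⟩
    rw [hwdef, ← Submodule.Quotient.mk_smul, Submodule.Quotient.eq]
    have : (c • (⟨e0, he0⟩ : Xsub n k l) - ⟨y + c • e0, hx⟩ : Xsub n k l) =
        ⟨c • e0 - (y + c • e0), by
          exact Submodule.sub_mem _ (Submodule.smul_mem _ _ he0) hx⟩ := rfl
    rw [this]
    show c • e0 - (y + c • e0) ∈ Submodule.span ℚ (Bset n k l)
    have : c • e0 - (y + c • e0) = -y := by abel
    rw [this]
    exact Submodule.neg_mem _ hy
  exact rank_eq_one w hw0 hwspan
end

section
/- For all k, l ∈ O with k < l and every m ∈ ℤ: the subspace X^{2m}_{k,l} is the internal direct sum of span(B^{2m}_{k,l}) and the line ℚ·X^{m,m}_{k,l} (in particular X^{m,m}_{k,l} ∉ span(B^{2m}_{k,l})), and the subspace X^{2m+1}_{k,l} is the internal direct sum of span(B^{2m+1}_{k,l}) and the line ℚ·X^{m,m+1}_{k,l} (in particular X^{m,m+1}_{k,l} ∉ span(B^{2m+1}_{k,l})). -/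
noncomputable def phiKL (k l : OddZ) : XSp →ₗ[ℚ] ℚ :=
  Finsupp.linearCombination ℚ (fun p : ℤ × ℤ × OddZ × OddZ =>
    if p.2.2.1 = k ∧ p.2.2.2 = l then (1 : ℚ)
    else if p.2.2.1 = l ∧ p.2.2.2 = k then -1 else 0)

lemma phi_kl (k l : OddZ) (a b : ℤ) : phiKL k l (Xb a b k l) = 1 := by
  simp [phiKL, Xb, Finsupp.linearCombination_single]

lemma phi_lk (k l : OddZ) (hne : k ≠ l) (a b : ℤ) : phiKL k l (Xb a b l k) = -1 := by
  simp [phiKL, Xb, Finsupp.linearCombination_single, hne, Ne.symm hne]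

lemma memB1 (n k l a b) (h : a + b = n) : Xb a b k l + Xb b a l k ∈ Bset n k l :=
  Or.inl ⟨a, b, h, rfl⟩

lemma memB2 (n k l a b) (h : a + b = n - 1) : Xb a (b + 1) k l + Xb b (a + 1) l k ∈ Bset n k l :=
  Or.inr ⟨a, b, h, rfl⟩

lemma key (k l : OddZ) (hkl : (k : ℤ) < (l : ℤ)) (n a0 : ℤ) :
    Disjoint (Submodule.span ℚ (Bset n k l)) (Submodule.span ℚ {Xb a0 (n - a0) k l}) ∧
    Submodule.span ℚ (Bset n k l) ⊔ Submodule.span ℚ {Xb a0 (n - a0) k l} = Xsub n k l ∧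
    Xb a0 (n - a0) k l ∉ Submodule.span ℚ (Bset n k l) := by
  have hne : k ≠ l := fun h => absurd (h ▸ hkl) (lt_irrefl _)
  have hker : Submodule.span ℚ (Bset n k l) ≤ LinearMap.ker (phiKL k l) := by
    rw [Submodule.span_le]
    rintro x (⟨a, b, hab, rfl⟩ | ⟨a, b, hab, rfl⟩) <;>
      simp [LinearMap.mem_ker, phi_kl, phi_lk k l hne]
  have hnm : Xb a0 (n - a0) k l ∉ Submodule.span ℚ (Bset n k l) := by
    intro h
    have := hker h
    simp [LinearMap.mem_ker, phi_kl] at this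
  refine ⟨?_, ?_, hnm⟩
  · rw [Submodule.disjoint_def]
    intro x hxB hxL
    rw [Submodule.mem_span_singleton] at hxL
    obtain ⟨q, rfl⟩ := hxL
    have h1 := hker hxB
    simp only [LinearMap.mem_ker, map_smul, phi_kl, smul_eq_mul, mul_one] at h1
    simp [h1]
  · set S := Submodule.span ℚ (Bset n k l) ⊔ Submodule.span ℚ {Xb a0 (n - a0) k l} with hS
    have hBS : ∀ x ∈ Bset n k l, x ∈ S := fun x hx =>
      Submodule.mem_sup_left (Submodule.subset_span hx)
    have heS : Xb a0 (n - a0) k l ∈ S :=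
      Submodule.mem_sup_right (Submodule.mem_span_singleton_self _)
    have base : Xb (n - a0) (n - (n - a0)) l k ∈ S := by
      have hv : Xb a0 (n - a0) k l + Xb (n - a0) a0 l k ∈ S := hBS _ (memB1 n k l a0 (n - a0) (by ring))
      have : Xb (n - a0) (n - (n - a0)) l k =
          (Xb a0 (n - a0) k l + Xb (n - a0) a0 l k) - Xb a0 (n - a0) k l := by
        rw [show n - (n - a0) = a0 from by ring]; abel
      rw [this]; exact Submodule.sub_mem _ hv heS
    have stepU : ∀ j : ℤ, Xb j (n - j) l k ∈ S → Xb (j + 1) (n - (j + 1)) l k ∈ S := by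
      intro j hj
      have hu : Xb (n - 1 - j) (j + 1) k l + Xb (j + 1) (n - 1 - j) l k ∈ S :=
        hBS _ (memB1 n k l (n - 1 - j) (j + 1) (by ring))
      have hd : Xb (n - 1 - j) (j + 1) k l + Xb j (n - j) l k ∈ S := by
        have := memB2 n k l (n - 1 - j) j (by ring)
        rw [show n - 1 - j + 1 = n - j from by ring] at this
        exact hBS _ this
      have : Xb (j + 1) (n - (j + 1)) l k =
          Xb j (n - j) l k + (Xb (n - 1 - j) (j + 1) k l + Xb (j + 1) (n - 1 - j) l k)
            - (Xb (n - 1 - j) (j + 1) k l + Xb j (n - j) l k) := by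
        rw [show n - (j + 1) = n - 1 - j from by ring]; abel
      rw [this]
      exact Submodule.sub_mem _ (Submodule.add_mem _ hj hu) hd
    have stepD : ∀ j : ℤ, Xb j (n - j) l k ∈ S → Xb (j - 1) (n - (j - 1)) l k ∈ S := by
      intro j hj
      have hu : Xb (n - j) j k l + Xb j (n - j) l k ∈ S :=
        hBS _ (memB1 n k l (n - j) j (by ring))
      have hd : Xb (n - j) j k l + Xb (j - 1) (n - (j - 1)) l k ∈ S := by
        have := memB2 n k l (n - j) (j - 1) (by ring)
        rw [show (j : ℤ) - 1 + 1 = j from by ring, show n - j + 1 = n - (j - 1) from by ring] at this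
        exact hBS _ this
      have : Xb (j - 1) (n - (j - 1)) l k =
          Xb j (n - j) l k - (Xb (n - j) j k l + Xb j (n - j) l k)
            + (Xb (n - j) j k l + Xb (j - 1) (n - (j - 1)) l k) := by abel
      rw [this]
      exact Submodule.add_mem _ (Submodule.sub_mem _ hj hu) hd
    have hf : ∀ j : ℤ, Xb j (n - j) l k ∈ S := by
      have main : ∀ i : ℤ, Xb (n - a0 + i) (n - (n - a0 + i)) l k ∈ S := by
        intro i
        induction i using Int.induction_on with
        | zero => simpa using base
        | succ i ih =>
          have h := stepU (n - a0 + i) ih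
          rw [show n - a0 + ((i : ℤ) + 1) = n - a0 + i + 1 from by ring]
          exact h
        | pred i ih =>
          have h := stepD (n - a0 + -(i : ℤ)) ih
          rw [show n - a0 + (-(i : ℤ) - 1) = n - a0 + -(i : ℤ) - 1 from by ring]
          exact h
      intro j
      have h := main (j - (n - a0))
      rw [show n - a0 + (j - (n - a0)) = j from by ring] at h
      exact h
    have he : ∀ a b : ℤ, a + b = n → Xb a b k l ∈ S := by
      intro a b hab
      have hv : Xb a b k l + Xb b a l k ∈ S := hBS _ (memB1 n k l a b hab)
      have hfb : Xb b a l k ∈ S := by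
        have := hf b
        rwa [show n - b = a from by omega] at this
      have : Xb a b k l = (Xb a b k l + Xb b a l k) - Xb b a l k := by abel
      rw [this]; exact Submodule.sub_mem _ hv hfb
    apply le_antisymm
    · apply sup_le
      · rw [Submodule.span_le]
        rintro x (⟨a, b, hab, rfl⟩ | ⟨a, b, hab, rfl⟩)
        · exact Submodule.add_mem _
            (Submodule.subset_span ⟨a, b, hab, Or.inl rfl⟩)
            (Submodule.subset_span ⟨b, a, by omega, Or.inr rfl⟩)
        · exact Submodule.add_mem _
            (Submodule.subset_span ⟨a, b + 1, by omega, Or.inl rfl⟩)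
            (Submodule.subset_span ⟨b, a + 1, by omega, Or.inr rfl⟩)
      · rw [Submodule.span_le, Set.singleton_subset_iff]
        exact Submodule.subset_span ⟨a0, n - a0, by ring, Or.inl rfl⟩
    · rw [Xsub, Submodule.span_le]
      rintro x ⟨a, b, hab, (rfl | rfl)⟩
      · exact he a b hab
      · have := hf a
        rwa [show n - a = b from by omega] at this

/-- For `k < l` and `m ∈ ℤ`: `X^{2m}_{k,l}` is the internal direct sum of `span(B^{2m}_{k,l})`
and the line `ℚ·X^{m,m}_{k,l}` (in particular `X^{m,m}_{k,l} ∉ span(B^{2m}_{k,l})`), and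
`X^{2m+1}_{k,l}` is the internal direct sum of `span(B^{2m+1}_{k,l})` and the line
`ℚ·X^{m,m+1}_{k,l}` (in particular `X^{m,m+1}_{k,l} ∉ span(B^{2m+1}_{k,l})`). -/
theorem stmt_4 (k l : OddZ) (hkl : (k : ℤ) < (l : ℤ)) (m : ℤ) :
    (Disjoint (Submodule.span ℚ (Bset (2 * m) k l)) (Submodule.span ℚ {Xb m m k l}) ∧
      Submodule.span ℚ (Bset (2 * m) k l) ⊔ Submodule.span ℚ {Xb m m k l} = Xsub (2 * m) k l ∧
      Xb m m k l ∉ Submodule.span ℚ (Bset (2 * m) k l)) ∧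
    (Disjoint (Submodule.span ℚ (Bset (2 * m + 1) k l)) (Submodule.span ℚ {Xb m (m + 1) k l}) ∧
      Submodule.span ℚ (Bset (2 * m + 1) k l) ⊔ Submodule.span ℚ {Xb m (m + 1) k l} =
        Xsub (2 * m + 1) k l ∧
      Xb m (m + 1) k l ∉ Submodule.span ℚ (Bset (2 * m + 1) k l)) := by
  have h1 := key k l hkl (2 * m) m
  have h2 := key k l hkl (2 * m + 1) m
  rw [show 2 * m - m = m from by ring] at h1
  rw [show 2 * m + 1 - m = m + 1 from by ring] at h2
  exact ⟨h1, h2⟩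
end

section
/- The union ⋃ B^n_{k,l}, taken over all n ∈ ℤ and all k, l ∈ O with k ≤ l, is a linearly independent subset of X. -/
lemma indep_of_marks {ι I : Type*} (v : ι → (I →₀ ℚ)) (μ : ι → I) (w : I → ℤ)
    (h1 : ∀ i, v i (μ i) ≠ 0)
    (h2 : ∀ i j, i ≠ j → v j (μ i) ≠ 0 → w (μ i) < w (μ j)) :
    LinearIndependent ℚ v := by
  rw [linearIndependent_iff]
  intro l hl
  by_contra hne
  obtain ⟨i, hi, hmax⟩ := l.support.exists_max_image (fun i => w (μ i))
    (Finsupp.support_nonempty_iff.2 hne)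
  have hz : (Finsupp.linearCombination ℚ v l) (μ i) = 0 := by rw [hl]; rfl
  rw [Finsupp.linearCombination_apply, Finsupp.sum, Finsupp.finset_sum_apply] at hz
  rw [Finset.sum_eq_single i (fun j hj hji => ?_) (fun h => absurd hi h)] at hz
  · exact absurd hz (by
      simp only [Finsupp.smul_apply, smul_eq_mul]
      exact mul_ne_zero (Finsupp.mem_support_iff.1 hi) (h1 i))
  · simp only [Finsupp.smul_apply, smul_eq_mul]
    rcases eq_or_ne (v j (μ i)) 0 with h | h
    · rw [h, mul_zero]
    · exact absurd (hmax j hj) (not_le.2 (h2 i j (Ne.symm hji) h))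

def Good : Bool × ℤ × ℤ × OddZ × OddZ → Prop :=
  fun q => (q.2.2.2.1 : ℤ) ≤ (q.2.2.2.2 : ℤ) ∧
    ((q.2.2.2.1 : ℤ) = (q.2.2.2.2 : ℤ) →
      (if q.1 then q.2.1 ≤ q.2.2.1 else q.2.2.1 ≤ q.2.1 + 1))

noncomputable def rawF : Bool × ℤ × ℤ × OddZ × OddZ → XSp :=
  fun q => if q.1 then Xb q.2.1 q.2.2.1 q.2.2.2.1 q.2.2.2.2 + Xb q.2.2.1 q.2.1 q.2.2.2.2 q.2.2.2.1
    else Xb q.2.1 q.2.2.1 q.2.2.2.1 q.2.2.2.2 + Xb (q.2.2.1 - 1) (q.2.1 + 1) q.2.2.2.2 q.2.2.2.1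

def mark : Bool × ℤ × ℤ × OddZ × OddZ → ℤ × ℤ × OddZ × OddZ :=
  fun q => if q.1 then
      (if (q.2.2.2.1 : ℤ) < (q.2.2.2.2 : ℤ) then (q.2.1, q.2.2.1, q.2.2.2.1, q.2.2.2.2)
        else (q.2.2.1, q.2.1, q.2.2.2.2, q.2.2.2.1))
    else (q.2.2.1 - 1, q.2.1 + 1, q.2.2.2.2, q.2.2.2.1)

def wt : ℤ × ℤ × OddZ × OddZ → ℤ :=
  fun p => if (p.2.2.1 : ℤ) < (p.2.2.2 : ℤ) then 2 * p.1
    else if (p.2.2.2 : ℤ) < (p.2.2.1 : ℤ) then 2 * p.2.1 - 1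
    else if p.1 ≤ p.2.1 then 2 * (p.2.1 - p.1) else 2 * (p.1 - p.2.1) + 1

lemma Xb_apply (a b : ℤ) (k l : OddZ) (q : ℤ × ℤ × OddZ × OddZ) :
    Xb a b k l q = if (a, b, k, l) = q then 1 else 0 := Finsupp.single_apply

lemma tuple_eq_iff (a b : ℤ) (k l : OddZ) (a' b' : ℤ) (k' l' : OddZ) :
    (a, b, k, l) = (a', b', k', l') ↔ a = a' ∧ b = b' ∧ (k:ℤ) = k' ∧ (l:ℤ) = l' := by
  simp [Prod.ext_iff, Subtype.ext_iff]

lemma good_iff (t : Bool) (a b : ℤ) (k l : OddZ) :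
    Good (t, a, b, k, l) ↔
      (k:ℤ) ≤ (l:ℤ) ∧ ((k:ℤ) = (l:ℤ) → (if t then a ≤ b else b ≤ a + 1)) := Iff.rfl

lemma h1lem (q : Bool × ℤ × ℤ × OddZ × OddZ) (hq : Good q) : rawF q (mark q) ≠ 0 := by
  obtain ⟨t, a, b, k, l⟩ := q
  rw [good_iff] at hq
  obtain ⟨hkl, hdiag⟩ := hq
  cases t <;> simp only [rawF, mark, if_true, if_false, Bool.false_eq_true] <;>
      rw [Finsupp.add_apply, Xb_apply, Xb_apply]
  · rw [if_pos rfl]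
    split_ifs <;> norm_num
  · rcases lt_or_eq_of_le hkl with hc | hc
    · rw [if_pos hc, if_pos rfl, if_neg (by rw [tuple_eq_iff]; omega)]
      norm_num
    · rw [if_neg (not_lt.2 (le_of_eq hc.symm)), if_pos rfl]
      split_ifs <;> norm_num

lemma wt_lt (q : Bool × ℤ × ℤ × OddZ × OddZ) (hq : Good q) (p : ℤ × ℤ × OddZ × OddZ)
    (hp : rawF q p ≠ 0) (hne : p ≠ mark q) : wt p < wt (mark q) := by
  obtain ⟨t, a, b, k, l⟩ := q
  rw [good_iff] at hq
  obtain ⟨hkl, hdiag⟩ := hq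
  cases t <;> simp only [rawF, mark, if_true, if_false, Bool.false_eq_true] at hp hne ⊢ <;>
      rw [Finsupp.add_apply, Xb_apply, Xb_apply] at hp
  · -- false : P = (a,b,k,l), mark = (b-1,a+1,l,k)
    rcases eq_or_ne ((a, b, k, l) : ℤ × ℤ × OddZ × OddZ) p with h1 | h1
    · rw [← h1]
      rw [← h1] at hne
      simp only [ne_eq, tuple_eq_iff] at hne
      replace hdiag : (k:ℤ) = (l:ℤ) → b ≤ a + 1 := hdiag
      simp only [wt]
      split_ifs <;> omega
    · rw [if_neg h1, zero_add] at hp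
      have h2 : ((b - 1, a + 1, l, k) : ℤ × ℤ × OddZ × OddZ) = p := by
        by_contra hc2; rw [if_neg hc2] at hp; exact hp rfl
      exact absurd h2.symm hne
  · -- true : P = (a,b,k,l), Q = (b,a,l,k)
    replace hdiag : (k:ℤ) = (l:ℤ) → a ≤ b := hdiag
    rcases lt_or_eq_of_le hkl with hc | hc
    · rw [if_pos hc] at hne ⊢
      rw [if_neg (fun h => hne h.symm), zero_add] at hp
      have h2 : ((b, a, l, k) : ℤ × ℤ × OddZ × OddZ) = p := by
        by_contra hc2; rw [if_neg hc2] at hp; exact hp rfl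
      rw [← h2]
      simp only [wt]
      split_ifs <;> omega
    · rw [if_neg (not_lt.2 (le_of_eq hc.symm))] at hne ⊢
      rcases eq_or_ne ((a, b, k, l) : ℤ × ℤ × OddZ × OddZ) p with h1 | h1
      · rw [← h1]
        rw [← h1] at hne
        simp only [ne_eq, tuple_eq_iff] at hne
        have hab : a ≤ b := hdiag hc
        simp only [wt]
        split_ifs <;> omega
      · rw [if_neg h1, zero_add] at hp
        have h2 : ((b, a, l, k) : ℤ × ℤ × OddZ × OddZ) = p := by
          by_contra hc2; rw [if_neg hc2] at hp; exact hp rfl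
        exact absurd h2.symm hne

lemma mark_inj (q q' : Bool × ℤ × ℤ × OddZ × OddZ) (hq : Good q) (hq' : Good q')
    (h : mark q = mark q') : q = q' := by
  obtain ⟨t, a, b, k, l⟩ := q
  obtain ⟨t', a', b', k', l'⟩ := q'
  rw [good_iff] at hq hq'
  obtain ⟨hkl, hd⟩ := hq
  obtain ⟨hkl', hd'⟩ := hq'
  cases t <;> cases t' <;>
    simp only [mark, if_true, if_false, Bool.false_eq_true] at h
  · -- false false
    rw [tuple_eq_iff] at h
    simp only [Prod.mk.injEq, Subtype.ext_iff, true_and]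
    omega
  · -- false true
    exfalso
    replace hd : (k:ℤ) = (l:ℤ) → b ≤ a + 1 := hd
    replace hd' : (k':ℤ) = (l':ℤ) → a' ≤ b' := hd'
    rcases lt_or_eq_of_le hkl' with hc | hc
    · rw [if_pos hc, tuple_eq_iff] at h
      omega
    · rw [if_neg (not_lt.2 (le_of_eq hc.symm)), tuple_eq_iff] at h
      have := hd (by omega)
      have := hd' hc
      omega
  · -- true false
    exfalso
    replace hd : (k:ℤ) = (l:ℤ) → a ≤ b := hd
    replace hd' : (k':ℤ) = (l':ℤ) → b' ≤ a' + 1 := hd'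
    rcases lt_or_eq_of_le hkl with hc | hc
    · rw [if_pos hc, tuple_eq_iff] at h
      omega
    · rw [if_neg (not_lt.2 (le_of_eq hc.symm)), tuple_eq_iff] at h
      have := hd hc
      have := hd' (by omega)
      omega
  · -- true true
    rcases lt_or_eq_of_le hkl with hc | hc <;>
      rcases lt_or_eq_of_le hkl' with hc' | hc'
    · rw [if_pos hc, if_pos hc', tuple_eq_iff] at h
      simp only [Prod.mk.injEq, Subtype.ext_iff, true_and]
      omega
    · rw [if_pos hc, if_neg (not_lt.2 (le_of_eq hc'.symm)), tuple_eq_iff] at h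
      exfalso; omega
    · rw [if_neg (not_lt.2 (le_of_eq hc.symm)), if_pos hc', tuple_eq_iff] at h
      exfalso; omega
    · rw [if_neg (not_lt.2 (le_of_eq hc.symm)),
        if_neg (not_lt.2 (le_of_eq hc'.symm)), tuple_eq_iff] at h
      simp only [Prod.mk.injEq, Subtype.ext_iff, true_and]
      omega

lemma range_eq :
    (⋃ (n : ℤ) (k : OddZ) (l : OddZ) (_ : (k : ℤ) ≤ (l : ℤ)), Bset n k l)
      = Set.range (fun i : {q // Good q} => rawF i.1) := by
  ext x
  simp only [Set.mem_iUnion, Set.mem_range, Bset, Set.mem_union, Set.mem_setOf_eq]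
  constructor
  · rintro ⟨n, k, l, hkl, ⟨a, b, hab, rfl⟩ | ⟨a, b, hab, rfl⟩⟩
    · rcases lt_or_eq_of_le hkl with hc | hc
      · exact ⟨⟨(true, a, b, k, l), ⟨hkl, fun h => absurd h (ne_of_lt hc)⟩⟩, rfl⟩
      · have : k = l := Subtype.ext hc
        subst this
        rcases le_total a b with hab2 | hab2
        · exact ⟨⟨(true, a, b, k, k), ⟨le_refl _, fun _ => hab2⟩⟩, rfl⟩
        · refine ⟨⟨(true, b, a, k, k), ⟨le_refl _, fun _ => hab2⟩⟩, ?_⟩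
          simp only [rawF, if_true]
          exact add_comm _ _
    · rcases lt_or_eq_of_le hkl with hc | hc
      · refine ⟨⟨(false, a, b + 1, k, l), ⟨hkl, fun h => absurd h (ne_of_lt hc)⟩⟩, ?_⟩
        simp only [rawF, Bool.false_eq_true, if_false, add_sub_cancel_right]
      · have : k = l := Subtype.ext hc
        subst this
        rcases le_total b a with hab2 | hab2
        · refine ⟨⟨(false, a, b + 1, k, k), ⟨le_refl _, fun _ => by simp only [Bool.false_eq_true, if_false]; omega⟩⟩, ?_⟩
          simp only [rawF, Bool.false_eq_true, if_false, add_sub_cancel_right]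
        · refine ⟨⟨(false, b, a + 1, k, k), ⟨le_refl _, fun _ => by simp only [Bool.false_eq_true, if_false]; omega⟩⟩, ?_⟩
          simp only [rawF, Bool.false_eq_true, if_false, add_sub_cancel_right]
          exact add_comm _ _
  · rintro ⟨⟨⟨t, a, b, k, l⟩, hg⟩, rfl⟩
    rw [good_iff] at hg
    cases t
    · refine ⟨a + b, k, l, hg.1, Or.inr ⟨a, b - 1, by ring, ?_⟩⟩
      simp only [rawF, Bool.false_eq_true, if_false, sub_add_cancel]
    · exact ⟨a + b, k, l, hg.1, Or.inl ⟨a, b, rfl, by simp only [rawF, if_true]⟩⟩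

/-- The union of the sets `B^n_{k,l}` over all `n ∈ ℤ` and odd `k ≤ l` is a linearly
independent subset of `X`. -/
theorem stmt_5 :
    LinearIndependent ℚ
      (fun v : (⋃ (n : ℤ) (k : OddZ) (l : OddZ) (_ : (k : ℤ) ≤ (l : ℤ)), Bset n k l) =>
        (v : XSp)) := by
  have hF : LinearIndependent ℚ (fun i : {q // Good q} => rawF i.1) := by
    refine indep_of_marks _ (fun i => mark i.1) wt (fun i => h1lem i.1 i.2) ?_
    intro i j hij hv
    refine wt_lt j.1 j.2 (mark i.1) hv ?_
    intro he
    exact hij (Subtype.ext (mark_inj _ _ i.2 j.2 he))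
  rw [range_eq]
  exact (linearIndepOn_id_range_iff hF.injective).mpr hF
end

section
/- The sequence 0 → J → X → Y → 0 is exact, where the first map is F1 and the second is Ψ; that is: F1 is injective, the range of F1 equals the kernel of Ψ, and Ψ is surjective. -/
/-- The free ℚ-vector space on symbols indexed by `(n, k, l)`, `n ∈ ℤ`, `k, l` odd. -/
abbrev WSp : Type := (ℤ × OddZ × OddZ) →₀ ℚ

/-- The subspace of relations, spanned by the elements `Y^n_{k,l} + Y^n_{l,k}`. -/
noncomputable def YRel : Submodule ℚ WSp :=
  Submodule.span ℚ
    {w | ∃ (n : ℤ) (k l : OddZ),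
      w = Finsupp.single (n, k, l) 1 + Finsupp.single (n, l, k) 1}

/-- The space `Y`, the quotient of the free space by the relations `Y^n_{k,l} = -Y^n_{l,k}`. -/
abbrev YSp : Type := WSp ⧸ YRel

/-- The image `Y^n_{k,l}` of a generator in the quotient `Y`. -/
noncomputable def Yb (n : ℤ) (k l : OddZ) : YSp :=
  Submodule.Quotient.mk (Finsupp.single (n, k, l) 1)

/-- The space `J`, with basis the symbols `J^+_p` (left summand) and `J^A_p` (right summand),
indexed by unordered pairs `p` of elements of `ℤ × O`. -/
abbrev JSp : Type := (Sym2 (ℤ × OddZ) ⊕ Sym2 (ℤ × OddZ)) →₀ ℚ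

-- test basic pieces
example (n : ℤ) (k l : OddZ) : Yb n k l + Yb n l k = 0 := by
  rw [Yb, Yb, ← Submodule.Quotient.mk_add, Submodule.Quotient.mk_eq_zero]
  exact Submodule.subset_span ⟨n, k, l, rfl⟩

noncomputable def cXb (q : ℤ × ℤ × OddZ × OddZ) : XSp :=
  if q.2.2.1.1 < q.2.2.2.1 then Xb 0 (q.1 + q.2.1) q.2.2.1 q.2.2.2
  else if q.2.2.2.1 < q.2.2.1.1 then -(Xb 0 (q.1 + q.2.1) q.2.2.2 q.2.2.1)
  else 0

noncomputable def LMap : XSp →ₗ[ℚ] XSp := Finsupp.linearCombination ℚ cXb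

noncomputable def wX (q : ℤ × OddZ × OddZ) : WSp :=
  if q.2.1.1 < q.2.2.1 then Finsupp.single q 1
  else if q.2.2.1 < q.2.1.1 then -(Finsupp.single (q.1, q.2.2, q.2.1) 1)
  else 0

noncomputable def phiW : WSp →ₗ[ℚ] WSp := Finsupp.linearCombination ℚ wX

lemma phiW_single (n : ℤ) (k l : OddZ) : phiW (Finsupp.single (n,k,l) 1) = wX (n,k,l) := by
  simp [phiW, Finsupp.linearCombination_single]

lemma YRel_le_ker : YRel ≤ LinearMap.ker phiW := by
  rw [YRel, Submodule.span_le]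
  rintro w ⟨n, k, l, rfl⟩
  simp only [SetLike.mem_coe, LinearMap.mem_ker, map_add, phiW_single]
  rcases lt_trichotomy k.1 l.1 with h | h | h
  · simp [wX, h, not_lt.2 h.le]
  · have : k = l := Subtype.ext h
    subst this
    simp [wX]
  · simp [wX, h, not_lt.2 h.le]

noncomputable def phibar : YSp →ₗ[ℚ] WSp := YRel.liftQ phiW YRel_le_ker

lemma phibar_Yb (n : ℤ) (k l : OddZ) : phibar (Yb n k l) = wX (n, k, l) := by
  rw [Yb, phibar]
  exact phiW_single n k l

noncomputable def rho : WSp →ₗ[ℚ] XSp :=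
  Finsupp.linearCombination ℚ (fun q => Xb 0 q.1 q.2.1 q.2.2)

lemma rho_single (n : ℤ) (k l : OddZ) : rho (Finsupp.single (n,k,l) 1) = Xb 0 n k l := by
  simp [rho, Finsupp.linearCombination_single]

section Range
variable (F1 : JSp →ₗ[ℚ] XSp)
    (hplus : ∀ (a b : ℤ) (k l : OddZ),
      F1 (Finsupp.single (Sum.inl s((a, k), (b, l))) 1) = Xb a b k l + Xb b a l k)
    (hA : ∀ (a b : ℤ) (k l : OddZ),
      F1 (Finsupp.single (Sum.inr s((a, k), (b, l))) 1) =
        Xb a (b + 1) k l + Xb b (a + 1) l k)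

include hplus hA

lemma shift_mem (a b : ℤ) (k l : OddZ) :
    Xb a b k l - Xb (a+1) (b-1) k l ∈ LinearMap.range F1 := by
  refine ⟨Finsupp.single (Sum.inr s((a,k),(b-1,l))) 1
    - Finsupp.single (Sum.inl s((b-1,l),(a+1,k))) 1, ?_⟩
  rw [map_sub, hA, hplus]
  have : b - 1 + 1 = b := by ring
  rw [this]
  abel

lemma shift_mem_t (t : ℤ) (a b : ℤ) (k l : OddZ) :
    Xb a b k l - Xb (a+t) (b-t) k l ∈ LinearMap.range F1 := by
  induction t using Int.induction_on with
  | zero => simp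
  | succ t ih =>
    have h2 := shift_mem F1 hplus hA (a+t) (b-t) k l
    have e : Xb a b k l - Xb (a+(t+1)) (b-(t+1)) k l
        = (Xb a b k l - Xb (a+t) (b-t) k l)
          + (Xb (a+t) (b-t) k l - Xb (a+t+1) (b-t-1) k l) := by
      have e1 : a + (t+1) = a + t + 1 := by ring
      have e2 : b - (t+1) = b - t - 1 := by ring
      rw [e1, e2]; abel
    rw [e]
    exact add_mem ih h2
  | pred t ih =>
    have h2 := shift_mem F1 hplus hA (a+(-t-1)) (b-(-t-1)) k l
    have e : Xb a b k l - Xb (a+(-t-1)) (b-(-t-1)) k l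
        = (Xb a b k l - Xb (a+(-t:ℤ)) (b-(-t:ℤ)) k l)
          - (Xb (a+(-t-1)) (b-(-t-1)) k l - Xb (a+(-t-1)+1) (b-(-t-1)-1) k l) := by
      have e1 : a + (-t-1) + 1 = a + (-t:ℤ) := by ring
      have e2 : b - (-t-1) - 1 = b - (-t:ℤ) := by ring
      rw [e1, e2]; abel
    rw [e]
    exact sub_mem ih h2

lemma to_zero_mem (a b : ℤ) (k l : OddZ) :
    Xb a b k l - Xb 0 (a+b) k l ∈ LinearMap.range F1 := by
  have h := shift_mem_t F1 hplus hA (-a) a b k l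
  have e1 : a + -a = 0 := by ring
  have e2 : b - -a = a + b := by ring
  rwa [e1, e2] at h

lemma swap_mem (n : ℤ) (k l : OddZ) :
    Xb 0 n k l + Xb 0 n l k ∈ LinearMap.range F1 := by
  have h1 : Xb 0 n k l + Xb n 0 l k ∈ LinearMap.range F1 := by
    refine ⟨Finsupp.single (Sum.inl s((0,k),(n,l))) 1, ?_⟩
    rw [hplus]
  have h2 := to_zero_mem F1 hplus hA n 0 l k
  have e : Xb 0 n k l + Xb 0 n l k
      = (Xb 0 n k l + Xb n 0 l k) - (Xb n 0 l k - Xb 0 (n+0) l k) := by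
    have : n + 0 = n := by ring
    rw [this]; abel
  rw [e]
  exact sub_mem h1 h2

lemma diag_mem (n : ℤ) (k : OddZ) : Xb 0 n k k ∈ LinearMap.range F1 := by
  have h := swap_mem F1 hplus hA n k k
  have e : Xb 0 n k k = (2:ℚ)⁻¹ • (Xb 0 n k k + Xb 0 n k k) := by
    rw [← two_smul ℚ, smul_smul]; norm_num
  rw [e]
  exact Submodule.smul_mem _ _ h

lemma canonical_mem (a b : ℤ) (k l : OddZ) :
    Xb a b k l - cXb (a,b,k,l) ∈ LinearMap.range F1 := by
  rcases lt_trichotomy k.1 l.1 with h | h | h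
  · rw [show cXb (a,b,k,l) = Xb 0 (a+b) k l from by simp [cXb, h]]
    exact to_zero_mem F1 hplus hA a b k l
  · have hkl : k = l := Subtype.ext h
    subst hkl
    rw [show cXb (a,b,k,k) = 0 from by simp [cXb]]
    rw [sub_zero]
    have h1 := to_zero_mem F1 hplus hA a b k k
    have h2 := diag_mem F1 hplus hA (a+b) k
    have e : Xb a b k k = (Xb a b k k - Xb 0 (a+b) k k) + Xb 0 (a+b) k k := by abel
    rw [e]; exact add_mem h1 h2
  · rw [show cXb (a,b,k,l) = -(Xb 0 (a+b) l k) from by simp [cXb, h, not_lt.2 h.le]]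
    have h1 := to_zero_mem F1 hplus hA a b k l
    have h2 := swap_mem F1 hplus hA (a+b) k l
    have e : Xb a b k l - -(Xb 0 (a+b) l k)
        = (Xb a b k l - Xb 0 (a+b) k l) + (Xb 0 (a+b) k l + Xb 0 (a+b) l k) := by abel
    rw [e]; exact add_mem h1 h2

lemma sub_L_mem (x : XSp) : x - LMap x ∈ LinearMap.range F1 := by
  induction x using Finsupp.induction with
  | zero => simp
  | single_add q r f hq hr ih =>
    have e : (Finsupp.single q r + f) - LMap (Finsupp.single q r + f)
        = (Finsupp.single q r - LMap (Finsupp.single q r)) + (f - LMap f) := by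
      rw [map_add]; abel
    rw [e]
    refine add_mem ?_ ih
    have hs : Finsupp.single q r = r • Finsupp.single q (1:ℚ) := by
      rw [Finsupp.smul_single', mul_one]
    rw [hs, map_smul, ← smul_sub]
    refine Submodule.smul_mem _ _ ?_
    obtain ⟨a, b, k, l⟩ := q
    have hL : LMap (Finsupp.single ((a,b,k,l) : ℤ × ℤ × OddZ × OddZ) (1:ℚ)) = cXb (a,b,k,l) := by
      simp [LMap, Finsupp.linearCombination_single]
    rw [hL]
    exact canonical_mem F1 hplus hA a b k l

end Range

lemma Yb_add_swap (n : ℤ) (k l : OddZ) : Yb n k l + Yb n l k = 0 := by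
  rw [Yb, Yb, ← Submodule.Quotient.mk_add, Submodule.Quotient.mk_eq_zero]
  exact Submodule.subset_span ⟨n, k, l, rfl⟩

section Psi
variable (F1 : JSp →ₗ[ℚ] XSp)
    (hplus : ∀ (a b : ℤ) (k l : OddZ),
      F1 (Finsupp.single (Sum.inl s((a, k), (b, l))) 1) = Xb a b k l + Xb b a l k)
    (hA : ∀ (a b : ℤ) (k l : OddZ),
      F1 (Finsupp.single (Sum.inr s((a, k), (b, l))) 1) =
        Xb a (b + 1) k l + Xb b (a + 1) l k)
    (Ψ : XSp →ₗ[ℚ] YSp)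
    (hΨ : ∀ (a b : ℤ) (k l : OddZ), Ψ (Xb a b k l) = Yb (a + b) k l)

include hplus hA hΨ in
lemma psi_comp_F1 : Ψ.comp F1 = 0 := by
  refine Finsupp.lhom_ext' ?_
  intro i
  refine LinearMap.ext_ring ?_
  obtain p | p := i
  · induction p using Sym2.ind with
    | _ x y =>
      obtain ⟨a, k⟩ := x; obtain ⟨b, l⟩ := y
      simp only [LinearMap.comp_apply, LinearMap.zero_apply,
        Finsupp.lsingle_apply, hplus, map_add, hΨ]
      rw [show b + a = a + b from by ring]
      exact Yb_add_swap (a+b) k l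
  · induction p using Sym2.ind with
    | _ x y =>
      obtain ⟨a, k⟩ := x; obtain ⟨b, l⟩ := y
      simp only [LinearMap.comp_apply, LinearMap.zero_apply,
        Finsupp.lsingle_apply, hA, map_add, hΨ]
      rw [show b + (a + 1) = a + (b + 1) from by ring]
      exact Yb_add_swap (a+(b+1)) k l

include hΨ in
lemma psi_comp_rho : Ψ.comp rho = YRel.mkQ := by
  refine Finsupp.lhom_ext ?_
  intro q r
  obtain ⟨n, k, l⟩ := q
  have hs : Finsupp.single ((n,k,l) : ℤ × OddZ × OddZ) r = r • Finsupp.single ((n,k,l) : ℤ × OddZ × OddZ) (1:ℚ) := by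
    rw [Finsupp.smul_single', mul_one]
  rw [hs, map_smul, map_smul]
  congr 1
  rw [LinearMap.comp_apply, rho_single, hΨ, Submodule.mkQ_apply]
  rw [show (0:ℤ) + n = n from by ring]
  rfl

include hΨ in
lemma rho_phibar_L : (rho.comp (phibar.comp Ψ)).comp LMap = LMap := by
  refine Finsupp.lhom_ext ?_
  intro q r
  obtain ⟨a, b, k, l⟩ := q
  have hs : Finsupp.single ((a,b,k,l) : ℤ × ℤ × OddZ × OddZ) r
      = r • Finsupp.single ((a,b,k,l) : ℤ × ℤ × OddZ × OddZ) (1:ℚ) := by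
    rw [Finsupp.smul_single', mul_one]
  rw [hs, map_smul, map_smul]
  congr 1
  have hL : LMap (Finsupp.single ((a,b,k,l) : ℤ × ℤ × OddZ × OddZ) (1:ℚ)) = cXb (a,b,k,l) := by
    simp [LMap, Finsupp.linearCombination_single]
  rw [LinearMap.comp_apply, hL, LinearMap.comp_apply, LinearMap.comp_apply]
  rcases lt_trichotomy k.1 l.1 with h | h | h
  · rw [show cXb (a,b,k,l) = Xb 0 (a+b) k l from by simp [cXb, h]]
    rw [hΨ, show (0:ℤ) + (a+b) = a + b from by ring, phibar_Yb]
    rw [show wX (a+b, k, l) = Finsupp.single ((a+b,k,l) : ℤ × OddZ × OddZ) 1 from by simp [wX, h]]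
    exact rho_single (a+b) k l
  · have hkl : k = l := Subtype.ext h
    subst hkl
    rw [show cXb (a,b,k,k) = 0 from by simp [cXb]]
    simp
  · rw [show cXb (a,b,k,l) = -(Xb 0 (a+b) l k) from by simp [cXb, h, not_lt.2 h.le]]
    rw [map_neg, hΨ, show (0:ℤ) + (a+b) = a + b from by ring, map_neg, phibar_Yb, map_neg]
    rw [show wX (a+b, l, k) = Finsupp.single ((a+b,l,k) : ℤ × OddZ × OddZ) 1 from by simp [wX, h]]
    rw [rho_single]

end Psi

lemma F1_apply_sum (F1 : JSp →ₗ[ℚ] XSp) (j : JSp) (x : ℤ × ℤ × OddZ × OddZ) :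
    F1 j x = j.sum fun i c => c * (F1 (Finsupp.single i 1) x) := by
  conv_lhs => rw [← Finsupp.sum_single j]
  rw [map_finsuppSum, Finsupp.sum_apply]
  refine Finsupp.sum_congr ?_
  intro i _
  have hs : Finsupp.single i (j i) = (j i) • Finsupp.single i (1:ℚ) := by
    rw [Finsupp.smul_single', mul_one]
  rw [hs, map_smul, Finsupp.smul_apply, smul_eq_mul]

section Inj
variable (F1 : JSp →ₗ[ℚ] XSp)
    (hplus : ∀ (a b : ℤ) (k l : OddZ),
      F1 (Finsupp.single (Sum.inl s((a, k), (b, l))) 1) = Xb a b k l + Xb b a l k)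
    (hA : ∀ (a b : ℤ) (k l : OddZ),
      F1 (Finsupp.single (Sum.inr s((a, k), (b, l))) 1) =
        Xb a (b + 1) k l + Xb b (a + 1) l k)

include hplus hA in
lemma F1_single_eval_zero (a d : ℤ) (k l : OddZ)
    (i : Sym2 (ℤ × OddZ) ⊕ Sym2 (ℤ × OddZ))
    (h1 : i ≠ Sum.inl s((a,k),(d+1,l))) (h2 : i ≠ Sum.inr s((a,k),(d,l))) :
    F1 (Finsupp.single i 1) (a, d+1, k, l) = 0 := by
  obtain p | p := i
  · induction p using Sym2.ind with
    | _ x y =>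
      obtain ⟨c1, c2⟩ := x; obtain ⟨d1, d2⟩ := y
      rw [hplus, Finsupp.add_apply, Xb, Xb, Finsupp.single_apply, Finsupp.single_apply]
      have hc1 : ¬(((c1, d1, c2, d2) : ℤ × ℤ × OddZ × OddZ) = (a, d+1, k, l)) := by
        intro he
        apply h1
        obtain ⟨e1, e2, e3, e4⟩ : c1 = a ∧ d1 = d + 1 ∧ c2 = k ∧ d2 = l := by
          simpa [Prod.ext_iff] using he
        subst e1; subst e2; subst e3; subst e4; rfl
      have hc2 : ¬(((d1, c1, d2, c2) : ℤ × ℤ × OddZ × OddZ) = (a, d+1, k, l)) := by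
        intro he
        apply h1
        obtain ⟨e1, e2, e3, e4⟩ : d1 = a ∧ c1 = d + 1 ∧ d2 = k ∧ c2 = l := by
          simpa [Prod.ext_iff] using he
        subst e1; subst e2; subst e3; subst e4
        rw [Sym2.eq_swap]
      rw [if_neg hc1, if_neg hc2, add_zero]
  · induction p using Sym2.ind with
    | _ x y =>
      obtain ⟨c1, c2⟩ := x; obtain ⟨d1, d2⟩ := y
      rw [hA, Finsupp.add_apply, Xb, Xb, Finsupp.single_apply, Finsupp.single_apply]
      have hc1 : ¬(((c1, d1 + 1, c2, d2) : ℤ × ℤ × OddZ × OddZ) = (a, d+1, k, l)) := by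
        intro he
        apply h2
        obtain ⟨e1, e2, e3, e4⟩ : c1 = a ∧ d1 + 1 = d + 1 ∧ c2 = k ∧ d2 = l := by
          simpa [Prod.ext_iff] using he
        have e2' : d1 = d := by omega
        subst e1; subst e2'; subst e3; subst e4; rfl
      have hc2 : ¬(((d1, c1 + 1, d2, c2) : ℤ × ℤ × OddZ × OddZ) = (a, d+1, k, l)) := by
        intro he
        apply h2
        obtain ⟨e1, e2, e3, e4⟩ : d1 = a ∧ c1 + 1 = d + 1 ∧ d2 = k ∧ c2 = l := by
          simpa [Prod.ext_iff] using he
        have e2' : c1 = d := by omega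
        subst e1; subst e2'; subst e3; subst e4
        rw [Sym2.eq_swap]
      rw [if_neg hc1, if_neg hc2, add_zero]

include hplus in
lemma F1_single_eval_pos1 (a d : ℤ) (k l : OddZ) :
    0 < F1 (Finsupp.single (Sum.inl s((a,k),(d+1,l))) 1) (a, d+1, k, l) := by
  rw [hplus, Finsupp.add_apply, Xb, Xb, Finsupp.single_apply, Finsupp.single_apply, if_pos rfl]
  split_ifs <;> norm_num

include hA in
lemma F1_single_eval_pos2 (a d : ℤ) (k l : OddZ) :
    0 < F1 (Finsupp.single (Sum.inr s((a,k),(d,l))) 1) (a, d+1, k, l) := by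
  rw [hA, Finsupp.add_apply, Xb, Xb, Finsupp.single_apply, Finsupp.single_apply, if_pos rfl]
  split_ifs <;> norm_num

end Inj

section Inj2
variable (F1 : JSp →ₗ[ℚ] XSp)
    (hplus : ∀ (a b : ℤ) (k l : OddZ),
      F1 (Finsupp.single (Sum.inl s((a, k), (b, l))) 1) = Xb a b k l + Xb b a l k)
    (hA : ∀ (a b : ℤ) (k l : OddZ),
      F1 (Finsupp.single (Sum.inr s((a, k), (b, l))) 1) =
        Xb a (b + 1) k l + Xb b (a + 1) l k)
    (j : JSp) (hj : F1 j = 0)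

include hplus hA hj in
lemma eval_rel (a d : ℤ) (k l : OddZ) :
    ∃ e1 e2 : ℚ, 0 < e1 ∧ 0 < e2 ∧
      e1 * j (Sum.inl s((a,k),(d+1,l))) + e2 * j (Sum.inr s((a,k),(d,l))) = 0 := by
  classical
  set i1 : Sym2 (ℤ × OddZ) ⊕ Sym2 (ℤ × OddZ) := Sum.inl s((a,k),(d+1,l)) with hi1
  set i2 : Sym2 (ℤ × OddZ) ⊕ Sym2 (ℤ × OddZ) := Sum.inr s((a,k),(d,l)) with hi2
  set g : Sym2 (ℤ × OddZ) ⊕ Sym2 (ℤ × OddZ) → ℚ :=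
    fun i => F1 (Finsupp.single i 1) (a, d+1, k, l) with hg
  refine ⟨g i1, g i2, F1_single_eval_pos1 F1 hplus a d k l,
    F1_single_eval_pos2 F1 hA a d k l, ?_⟩
  have h0 : F1 j (a, d+1, k, l) = 0 := by rw [hj]; rfl
  rw [F1_apply_sum] at h0
  have h0' : (j.sum fun i c => c * g i) = 0 := h0
  have hne : i1 ≠ i2 := by simp [hi1, hi2]
  have hsum : (j.sum fun i c => c * g i)
      = (j.sum fun i c => (if i = i1 then c * g i1 else 0) + (if i = i2 then c * g i2 else 0)) := by
    refine Finsupp.sum_congr ?_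
    intro i _
    by_cases e1 : i = i1
    · subst e1
      rw [if_pos rfl, if_neg hne, add_zero]
    · by_cases e2 : i = i2
      · subst e2
        rw [if_neg e1, if_pos rfl, zero_add]
      · rw [if_neg e1, if_neg e2, add_zero]
        have hz : g i = 0 := F1_single_eval_zero F1 hplus hA a d k l i e1 e2
        rw [hz, mul_zero]
  rw [hsum, Finsupp.sum_add, Finsupp.sum_ite_eq', Finsupp.sum_ite_eq'] at h0'
  have r1 : (if i1 ∈ j.support then j i1 * g i1 else 0) = g i1 * j i1 := by
    split_ifs with h
    · ring
    · rw [Finsupp.notMem_support_iff.1 h, mul_zero]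
  have r2 : (if i2 ∈ j.support then j i2 * g i2 else 0) = g i2 * j i2 := by
    split_ifs with h
    · ring
    · rw [Finsupp.notMem_support_iff.1 h, mul_zero]
  rw [r1, r2] at h0'
  exact h0'

include hplus hA hj in
lemma step1 (a d : ℤ) (k l : OddZ) (h : j (Sum.inl s((a,k),(d+1,l))) ≠ 0) :
    j (Sum.inr s((a,k),(d,l))) ≠ 0 := by
  obtain ⟨e1, e2, he1, he2, heq⟩ := eval_rel F1 hplus hA j hj a d k l
  intro h0
  rw [h0, mul_zero, add_zero, mul_eq_zero] at heq
  rcases heq with h' | h'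
  · exact absurd h' he1.ne'
  · exact h h'

include hplus hA hj in
lemma step2 (a d : ℤ) (k l : OddZ) (h : j (Sum.inr s((a,k),(d,l))) ≠ 0) :
    j (Sum.inl s((a+1,k),(d,l))) ≠ 0 := by
  obtain ⟨e1, e2, he1, he2, heq⟩ := eval_rel F1 hplus hA j hj d a l k
  rw [show s((d,l),(a+1,k)) = s((a+1,k),(d,l)) from Sym2.eq_swap,
      show s((d,l),(a,k)) = s((a,k),(d,l)) from Sym2.eq_swap] at heq
  intro h0
  rw [h0, mul_zero, zero_add, mul_eq_zero] at heq
  rcases heq with h' | h'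
  · exact absurd h' he2.ne'
  · exact h h'

include hplus hA hj in
lemma chain (a d : ℤ) (k l : OddZ) (h : j (Sum.inl s((a,k),(d+1,l))) ≠ 0) :
    ∀ t : ℕ, j (Sum.inl s((a + t, k), (d + 1 - t, l))) ≠ 0 := by
  intro t
  induction t with
  | zero => simpa using h
  | succ t ih =>
    rw [show d + 1 - (t:ℤ) = (d - t) + 1 from by ring] at ih
    have h1 := step1 F1 hplus hA j hj (a + t) (d - t) k l ih
    have h2 := step2 F1 hplus hA j hj (a + t) (d - t) k l h1
    rw [show a + ((t+1:ℕ):ℤ) = a + t + 1 from by push_cast; ring,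
      show d + 1 - ((t+1:ℕ):ℤ) = d - t from by push_cast; ring]
    exact h2

end Inj2

noncomputable def msym : Sym2 (ℤ × OddZ) → ℤ :=
  Sym2.lift ⟨fun x y => max x.1 y.1, fun x y => max_comm _ _⟩

noncomputable def HJ : Sym2 (ℤ × OddZ) ⊕ Sym2 (ℤ × OddZ) → ℤ := Sum.elim msym msym

lemma HJ_inl (x y : ℤ × OddZ) : HJ (Sum.inl s(x, y)) = max x.1 y.1 := by
  simp [HJ, msym]

section Inj3
variable (F1 : JSp →ₗ[ℚ] XSp)
    (hplus : ∀ (a b : ℤ) (k l : OddZ),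
      F1 (Finsupp.single (Sum.inl s((a, k), (b, l))) 1) = Xb a b k l + Xb b a l k)
    (hA : ∀ (a b : ℤ) (k l : OddZ),
      F1 (Finsupp.single (Sum.inr s((a, k), (b, l))) 1) =
        Xb a (b + 1) k l + Xb b (a + 1) l k)
    (j : JSp) (hj : F1 j = 0)

include hplus hA hj in
lemma inl_zero (a b : ℤ) (k l : OddZ) : j (Sum.inl s((a,k),(b,l))) = 0 := by
  by_contra h
  have hb : b = (b - 1) + 1 := by ring
  rw [hb] at h
  set d := b - 1 with hd
  have hch := chain F1 hplus hA j hj a d k l h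
  have hmem : ∀ t : ℕ, Sum.inl s(((a + t : ℤ), k), ((d + 1 - t : ℤ), l)) ∈ j.support :=
    fun t => Finsupp.mem_support_iff.2 (hch t)
  have hne : j.support.Nonempty := ⟨_, hmem 0⟩
  set B := j.support.sup' hne HJ with hB
  have hub : ∀ t : ℕ, a + t ≤ B := by
    intro t
    have h1 : HJ (Sum.inl s(((a + t : ℤ), k), ((d + 1 - t : ℤ), l))) ≤ B :=
      Finset.le_sup' HJ (hmem t)
    rw [HJ_inl] at h1
    exact le_trans (le_max_left _ _) h1
  have h2 := hub ((B - a).toNat + 1)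
  have h3 := Int.self_le_toNat (B - a)
  push_cast at h2
  omega

include hplus hA hj in
lemma inr_zero (a d : ℤ) (k l : OddZ) : j (Sum.inr s((a,k),(d,l))) = 0 := by
  obtain ⟨e1, e2, he1, he2, heq⟩ := eval_rel F1 hplus hA j hj a d k l
  rw [inl_zero F1 hplus hA j hj a (d+1) k l, mul_zero, zero_add, mul_eq_zero] at heq
  rcases heq with h' | h'
  · exact absurd h' he2.ne'
  · exact h'

include hplus hA hj in
lemma j_eq_zero : j = 0 := by
  ext i
  rw [Finsupp.coe_zero, Pi.zero_apply]
  obtain p | p := i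
  · induction p using Sym2.ind with
    | _ x y =>
      obtain ⟨a, k⟩ := x; obtain ⟨b, l⟩ := y
      exact inl_zero F1 hplus hA j hj a b k l
  · induction p using Sym2.ind with
    | _ x y =>
      obtain ⟨a, k⟩ := x; obtain ⟨d, l⟩ := y
      exact inr_zero F1 hplus hA j hj a d k l

end Inj3


/-- The sequence `0 → J → X → Y → 0` is exact, where `F1 : J → X` is the linear map with
`F1(J^+_{{(a,k),(b,l)}}) = X^{a,b}_{k,l} + X^{b,a}_{l,k}` and
`F1(J^A_{{(a,k),(b,l)}}) = X^{a,b+1}_{k,l} + X^{b,a+1}_{l,k}`, and `Ψ : X → Y` is the linear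
map with `Ψ(X^{a,b}_{k,l}) = Y^{a+b}_{k,l}`: that is, `F1` is injective, the range of `F1`
equals the kernel of `Ψ`, and `Ψ` is surjective. -/
theorem stmt_8 (F1 : JSp →ₗ[ℚ] XSp)
    (hF1plus : ∀ (a b : ℤ) (k l : OddZ),
      F1 (Finsupp.single (Sum.inl s((a, k), (b, l))) 1) = Xb a b k l + Xb b a l k)
    (hF1A : ∀ (a b : ℤ) (k l : OddZ),
      F1 (Finsupp.single (Sum.inr s((a, k), (b, l))) 1) =
        Xb a (b + 1) k l + Xb b (a + 1) l k)
    (Ψ : XSp →ₗ[ℚ] YSp)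
    (hΨ : ∀ (a b : ℤ) (k l : OddZ), Ψ (Xb a b k l) = Yb (a + b) k l) :
    Function.Injective F1 ∧ LinearMap.range F1 = LinearMap.ker Ψ ∧ Function.Surjective Ψ := by
  have hcomp := psi_comp_F1 F1 hF1plus hF1A Ψ hΨ
  refine ⟨?_, ?_, ?_⟩
  · intro x y hxy
    have h : F1 (x - y) = 0 := by rw [map_sub, hxy, sub_self]
    have h0 := j_eq_zero F1 hF1plus hF1A (x - y) h
    exact sub_eq_zero.1 h0
  · apply le_antisymm
    · rintro _ ⟨jj, rfl⟩
      rw [LinearMap.mem_ker, ← LinearMap.comp_apply, hcomp, LinearMap.zero_apply]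
    · intro x hx
      rw [LinearMap.mem_ker] at hx
      obtain ⟨jj, hjj⟩ := sub_L_mem F1 hF1plus hF1A x
      have hPL : Ψ (LMap x) = 0 := by
        have h1 : Ψ (x - LMap x) = 0 := by
          rw [← hjj, ← LinearMap.comp_apply, hcomp, LinearMap.zero_apply]
        rw [map_sub, hx, zero_sub, neg_eq_zero] at h1
        exact h1
      have h3 := DFunLike.congr_fun (rho_phibar_L Ψ hΨ) x
      simp only [LinearMap.comp_apply] at h3
      rw [hPL, map_zero, map_zero] at h3
      rw [← h3, sub_zero] at hjj
      exact ⟨jj, hjj⟩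
  · intro y
    obtain ⟨w, rfl⟩ := YRel.mkQ_surjective y
    exact ⟨rho w, by rw [← LinearMap.comp_apply, psi_comp_rho Ψ hΨ]⟩
end

section
/- For every n ∈ ℤ and all k, l ∈ O with k ≤ l: the intersection of the kernel of Ψ with X^n_{k,l} equals the span of B^n_{k,l}, and the image Ψ(X^n_{k,l}) equals the ℚ-span of Y^n_{k,l} in Y. In particular, the restricted sequence 0 → span(B^n_{k,l}) → X^n_{k,l} → ℚ·Y^n_{k,l} → 0 is exact. -/
/-- For every `n ∈ ℤ` and odd `k ≤ l`: the intersection of the kernel of `Ψ` with `X^n_{k,l}`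
equals the span of `B^n_{k,l}`, and the image `Ψ(X^n_{k,l})` equals the span of `Y^n_{k,l}`
in `Y`; i.e. the restricted sequence `0 → span(B^n_{k,l}) → X^n_{k,l} → ℚ·Y^n_{k,l} → 0`
is exact. -/
theorem stmt_10 (Ψ : XSp →ₗ[ℚ] YSp)
    (hΨ : ∀ (a b : ℤ) (k l : OddZ), Ψ (Xb a b k l) = Yb (a + b) k l)
    (n : ℤ) (k l : OddZ) (hkl : (k : ℤ) ≤ (l : ℤ)) :
    LinearMap.ker Ψ ⊓ Xsub n k l = Submodule.span ℚ (Bset n k l) ∧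
    Submodule.map Ψ (Xsub n k l) = Submodule.span ℚ {Yb n k l} := by
  classical
  -- Y relations
  have hYrel : ∀ (m : ℤ) (k' l' : OddZ), Yb m k' l' + Yb m l' k' = 0 := by
    intro m k' l'
    have hmem : (Finsupp.single (m, k', l') 1 + Finsupp.single (m, l', k') 1 : WSp) ∈ YRel :=
      Submodule.subset_span ⟨m, k', l', rfl⟩
    show Submodule.Quotient.mk _ + Submodule.Quotient.mk _ = (0 : YSp)
    rw [← Submodule.Quotient.mk_add]
    exact (Submodule.Quotient.mk_eq_zero _).2 hmem

  -- nonvanishing of Yb n k l when k < l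
  have hYne : ∀ (c : ℚ), (k : ℤ) < (l : ℤ) → c • Yb n k l = 0 → c = 0 := by
    intro c hklt hc
    set g : WSp →ₗ[ℚ] ℚ := Finsupp.linearCombination ℚ
      (fun i : ℤ × OddZ × OddZ =>
        if (i.2.1 : ℤ) < (i.2.2 : ℤ) then (1 : ℚ)
        else if (i.2.2 : ℤ) < (i.2.1 : ℤ) then (-1 : ℚ) else 0) with hg
    have hgrel : YRel ≤ LinearMap.ker g := by
      rw [YRel, Submodule.span_le]
      rintro w ⟨m, k', l', rfl⟩
      simp only [SetLike.mem_coe, LinearMap.mem_ker, map_add, hg,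
        Finsupp.linearCombination_single, one_smul]
      rcases lt_trichotomy (k' : ℤ) (l' : ℤ) with h | h | h
      · simp [h, asymm h]
      · simp [h]
      · simp [h, asymm h]
    have hmem : (c • Finsupp.single (n, k, l) 1 : WSp) ∈ YRel := by
      rw [← Submodule.Quotient.mk_eq_zero]
      rw [Submodule.Quotient.mk_smul]
      exact hc
    have := hgrel hmem
    simp only [LinearMap.mem_ker, map_smul, hg, Finsupp.linearCombination_single,
      one_smul, smul_eq_mul] at this
    simpa [hklt] using this
  set S := Submodule.span ℚ (Bset n k l) with hS
  set u := Xb 0 n k l with hu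
  set v := Xb n 0 l k with hv
  have hΨu : Ψ u = Yb n k l := by rw [hu, hΨ]; rw [zero_add]
  have hΨv : Ψ v = Yb n l k := by rw [hv, hΨ]; rw [add_zero]
  have huv : u + v ∈ S := by
    refine Submodule.subset_span (Or.inl ⟨0, n, zero_add n, ?_⟩)
    rw [hu, hv]
  -- step lemmas
  have hstep1 : ∀ a : ℤ, Xb a (n - a) k l - Xb (a - 1) (n - a + 1) k l ∈ S := by
    intro a
    have h1 : Xb a (n - a) k l + Xb (n - a) a l k ∈ Bset n k l :=
      Or.inl ⟨a, n - a, by ring, rfl⟩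
    have h2 : Xb (a - 1) (n - a + 1) k l + Xb (n - a) a l k ∈ Bset n k l := by
      refine Or.inr ⟨a - 1, n - a, by ring, ?_⟩
      rw [show a - 1 + 1 = a by ring]
    have h3 := S.sub_mem (Submodule.subset_span h1) (Submodule.subset_span h2)
    have h4 : (Xb a (n - a) k l + Xb (n - a) a l k)
        - (Xb (a - 1) (n - a + 1) k l + Xb (n - a) a l k)
        = Xb a (n - a) k l - Xb (a - 1) (n - a + 1) k l := by abel
    rwa [h4] at h3
  have hstep2 : ∀ b : ℤ, Xb (n - b) b l k - Xb (n - b - 1) (b + 1) l k ∈ S := by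
    intro b
    have h1 : Xb b (n - b) k l + Xb (n - b) b l k ∈ Bset n k l :=
      Or.inl ⟨b, n - b, by ring, rfl⟩
    have h2 : Xb b (n - b) k l + Xb (n - b - 1) (b + 1) l k ∈ Bset n k l := by
      refine Or.inr ⟨b, n - b - 1, by ring, ?_⟩
      rw [show n - b - 1 + 1 = n - b by ring]
    have h3 := S.sub_mem (Submodule.subset_span h1) (Submodule.subset_span h2)
    have h4 : (Xb b (n - b) k l + Xb (n - b) b l k)
        - (Xb b (n - b) k l + Xb (n - b - 1) (b + 1) l k)
        = Xb (n - b) b l k - Xb (n - b - 1) (b + 1) l k := by abel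
    rwa [h4] at h3
  have ind1 : ∀ a : ℤ, Xb a (n - a) k l - u ∈ S := by
    intro a
    induction a using Int.induction_on with
    | zero => rw [show n - (0:ℤ) = n by ring, hu, sub_self]; exact S.zero_mem
    | succ i ih =>
        have h := hstep1 ((i : ℤ) + 1)
        rw [show (i : ℤ) + 1 - 1 = (i : ℤ) by ring,
          show n - ((i : ℤ) + 1) + 1 = n - (i : ℤ) by ring] at h
        have h5 := S.add_mem h ih
        have h6 : (Xb ((i:ℤ)+1) (n - ((i:ℤ)+1)) k l - Xb (i:ℤ) (n - (i:ℤ)) k l)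
            + (Xb (i:ℤ) (n - (i:ℤ)) k l - u)
            = Xb ((i:ℤ)+1) (n - ((i:ℤ)+1)) k l - u := by abel
        rwa [h6] at h5
    | pred i ih =>
        have h := hstep1 (-(i : ℤ))
        rw [show n - -(i : ℤ) + 1 = n - (-(i:ℤ) - 1) by ring] at h
        have h5 := S.sub_mem ih h
        have h6 : (Xb (-(i:ℤ)) (n - -(i:ℤ)) k l - u)
            - (Xb (-(i:ℤ)) (n - -(i:ℤ)) k l - Xb (-(i:ℤ) - 1) (n - (-(i:ℤ) - 1)) k l)
            = Xb (-(i:ℤ) - 1) (n - (-(i:ℤ) - 1)) k l - u := by abel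
        rwa [h6] at h5
  have ind2 : ∀ b : ℤ, Xb (n - b) b l k - v ∈ S := by
    intro b
    induction b using Int.induction_on with
    | zero => rw [show n - (0:ℤ) = n by ring, hv, sub_self]; exact S.zero_mem
    | succ i ih =>
        have h := hstep2 (i : ℤ)
        have h5 := S.sub_mem ih h
        have h6 : (Xb (n - (i:ℤ)) (i:ℤ) l k - v)
            - (Xb (n - (i:ℤ)) (i:ℤ) l k - Xb (n - (i:ℤ) - 1) ((i:ℤ) + 1) l k)
            = Xb (n - (i:ℤ) - 1) ((i:ℤ) + 1) l k - v := by abel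
        rw [h6] at h5
        rwa [show n - ((i:ℤ) + 1) = n - (i:ℤ) - 1 by ring]
    | pred i ih =>
        have h := hstep2 (-(i:ℤ) - 1)
        rw [show n - (-(i:ℤ) - 1) - 1 = n - -(i:ℤ) by ring,
          show -(i:ℤ) - 1 + 1 = -(i:ℤ) by ring] at h
        have h5 := S.add_mem h ih
        have h6 : (Xb (n - (-(i:ℤ) - 1)) (-(i:ℤ) - 1) l k - Xb (n - -(i:ℤ)) (-(i:ℤ)) l k)
            + (Xb (n - -(i:ℤ)) (-(i:ℤ)) l k - v)
            = Xb (n - (-(i:ℤ) - 1)) (-(i:ℤ) - 1) l k - v := by abel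
        rwa [h6] at h5
  have claimA : ∀ a b : ℤ, a + b = n → Xb a b k l - u ∈ S := by
    intro a b hab
    obtain rfl : b = n - a := by omega
    exact ind1 a
  have claimB : ∀ a b : ℤ, a + b = n → Xb a b l k - v ∈ S := by
    intro a b hab
    obtain rfl : a = n - b := by omega
    exact ind2 b
  -- easy inclusion: span B ≤ ker ⊓ Xsub
  have hBle : S ≤ LinearMap.ker Ψ ⊓ Xsub n k l := by
    rw [hS, Submodule.span_le]
    rintro x (⟨a, b, hab, rfl⟩ | ⟨a, b, hab, rfl⟩)
    · refine Submodule.mem_inf.2 ⟨LinearMap.mem_ker.2 ?_, ?_⟩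
      · rw [map_add, hΨ, hΨ, hab, show b + a = n by omega]
        exact hYrel n k l
      · exact (Xsub n k l).add_mem
          (Submodule.subset_span ⟨a, b, hab, Or.inl rfl⟩)
          (Submodule.subset_span ⟨b, a, by omega, Or.inr rfl⟩)
    · refine Submodule.mem_inf.2 ⟨LinearMap.mem_ker.2 ?_, ?_⟩
      · rw [map_add, hΨ, hΨ, show a + (b + 1) = n by omega, show b + (a + 1) = n by omega]
        exact hYrel n k l
      · exact (Xsub n k l).add_mem
          (Submodule.subset_span ⟨a, b + 1, by omega, Or.inl rfl⟩)
          (Submodule.subset_span ⟨b, a + 1, by omega, Or.inr rfl⟩)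
  constructor
  · refine le_antisymm ?_ hBle
    rintro x hx
    obtain ⟨hxker, hxsub⟩ := Submodule.mem_inf.1 hx
    by_cases hkeq : (k : ℤ) = (l : ℤ)
    · -- k = l : everything is in S
      obtain rfl : k = l := Subtype.ext hkeq
      have huvS : u - v ∈ S := claimB 0 n (zero_add n)
      have h2u : (u - v) + (u + v) ∈ S := S.add_mem huvS huv
      have h2u' : (2 : ℚ) • u ∈ S := by
        have : (u - v) + (u + v) = (2 : ℚ) • u := by rw [two_smul]; abel
        rwa [this] at h2u
      have huS : u ∈ S := by
        have := S.smul_mem ((2 : ℚ)⁻¹) h2u'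
        rwa [smul_smul, show ((2:ℚ)⁻¹ * 2) = 1 by norm_num, one_smul] at this
      have hvS : v ∈ S := by
        have := S.sub_mem huS huvS
        rwa [sub_sub_cancel] at this
      have : Xsub n k k ≤ S := by
        rw [Xsub, Submodule.span_le]
        rintro x ⟨a, b, hab, (rfl | rfl)⟩
        · have h1 := S.add_mem (claimA a b hab) huS
          rwa [sub_add_cancel] at h1
        · have h1 := S.add_mem (claimB a b hab) hvS
          rwa [sub_add_cancel] at h1
      exact this hxsub
    · have hklt : (k : ℤ) < (l : ℤ) := lt_of_le_of_ne hkl hkeq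
      have hsup : Xsub n k l ≤ S ⊔ Submodule.span ℚ {u, v} := by
        rw [Xsub, Submodule.span_le]
        rintro x ⟨a, b, hab, (rfl | rfl)⟩
        · have h1 := Submodule.add_mem _ (Submodule.mem_sup_left (claimA a b hab))
            (Submodule.mem_sup_right
              (Submodule.subset_span (by simp : u ∈ ({u, v} : Set XSp))))
          rwa [sub_add_cancel] at h1
        · have h1 := Submodule.add_mem _ (Submodule.mem_sup_left (claimB a b hab))
            (Submodule.mem_sup_right
              (Submodule.subset_span (by simp : v ∈ ({u, v} : Set XSp))))
          rwa [sub_add_cancel] at h1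
      obtain ⟨s, hs, w, hw, rfl⟩ := Submodule.mem_sup.1 (hsup hxsub)
      obtain ⟨α, β, rfl⟩ := Submodule.mem_span_pair.1 hw
      have hsker : Ψ s = 0 := LinearMap.mem_ker.1 (Submodule.mem_inf.1 (hBle hs)).1
      have h0 : (α - β) • Yb n k l = 0 := by
        have h1 : Ψ (s + (α • u + β • v)) = 0 := LinearMap.mem_ker.1 hxker
        rw [map_add, map_add, map_smul, map_smul, hsker, hΨu, hΨv, zero_add] at h1
        have h2 : Yb n l k = -Yb n k l := eq_neg_of_add_eq_zero_right (hYrel n k l)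
        rw [h2, smul_neg, ← sub_eq_add_neg, ← sub_smul] at h1
        exact h1
      have hab0 : α = β := by
        have := hYne (α - β) hklt h0
        linarith
      have : s + (α • u + β • v) = s + α • (u + v) := by
        rw [hab0, smul_add]
      rw [this]
      exact S.add_mem hs (S.smul_mem α huv)
  · rw [Xsub, Submodule.map_span]
    apply le_antisymm
    · rw [Submodule.span_le]
      rintro y ⟨x, ⟨a, b, hab, (rfl | rfl)⟩, rfl⟩
      · rw [SetLike.mem_coe, hΨ, hab]
        exact Submodule.subset_span rfl
      · rw [SetLike.mem_coe, hΨ, hab]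
        have h2 : Yb n l k = -Yb n k l := eq_neg_of_add_eq_zero_right (hYrel n k l)
        rw [h2]
        exact Submodule.neg_mem _ (Submodule.subset_span rfl)
    · rw [Submodule.span_le, Set.singleton_subset_iff, SetLike.mem_coe]
      refine Submodule.subset_span ⟨Xb 0 n k l, ⟨0, n, zero_add n, Or.inl rfl⟩, ?_⟩
      rw [hΨ, zero_add]
end

section
/- For each m ∈ ℤ let G_m : X → ℚ be the linear functional determined on basis vectors by: G_m(X^{a,b}_{k,l}) = k − l if a + b − k − l = m and k + l = 0; G_m(X^{a,b}_{k,l}) = (l − k)/2 if a + b − k − l = m and k + l = 2 or k + l = −2; and G_m(X^{a,b}_{k,l}) = 0 otherwise. Let X̄ = ∩_{m ∈ ℤ} ker(G_m). Then the cosets of the vectors X^{m,0}_{1,−1}, m ∈ ℤ, form a basis of the quotient ℚ-vector space X / X̄. -/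
/-- `1` as an odd integer. -/
def oneOdd : OddZ := ⟨1, odd_one⟩

/-- `-1` as an odd integer. -/
def negOneOdd : OddZ := ⟨-1, ⟨-1, by ring⟩⟩

noncomputable def idxP (p : ℤ × ℤ × OddZ × OddZ) : ℤ :=
  p.1 + p.2.1 - (p.2.2.1 : ℤ) - (p.2.2.2 : ℤ)

noncomputable def coefP (p : ℤ × ℤ × OddZ × OddZ) : ℚ :=
  if ((p.2.2.1 : ℤ) + (p.2.2.2 : ℤ) = 0) then (((p.2.2.1 : ℤ) - (p.2.2.2 : ℤ) : ℤ) : ℚ)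
  else if ((p.2.2.1 : ℤ) + (p.2.2.2 : ℤ) = 2 ∨ (p.2.2.1 : ℤ) + (p.2.2.2 : ℤ) = -2) then
    (((p.2.2.2 : ℤ) - (p.2.2.1 : ℤ) : ℤ) : ℚ) / 2
  else 0

noncomputable def phi : XSp →ₗ[ℚ] (ℤ →₀ ℚ) :=
  Finsupp.lsum ℚ (fun p => coefP p • Finsupp.lsingle (idxP p))

lemma phi_single (p : ℤ × ℤ × OddZ × OddZ) (c : ℚ) :
    phi (Finsupp.single p c) = Finsupp.single (idxP p) (coefP p * c) := by
  rw [phi, Finsupp.lsum_single]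
  rw [LinearMap.smul_apply, Finsupp.lsingle_apply, Finsupp.smul_single, smul_eq_mul]

lemma phi_Xb (i : ℤ) : phi (Xb i 0 oneOdd negOneOdd) = Finsupp.single i 2 := by
  rw [Xb, phi_single]
  norm_num [idxP, coefP, oneOdd, negOneOdd]

/-- Let `G_m : X → ℚ` be the linear functionals with `G_m(X^{a,b}_{k,l}) = k − l` if
`a + b − k − l = m` and `k + l = 0`; `G_m(X^{a,b}_{k,l}) = (l − k)/2` if `a + b − k − l = m`
and `k + l = ±2`; and `G_m(X^{a,b}_{k,l}) = 0` otherwise. Let `X̄ = ∩_m ker(G_m)`. Then the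
cosets of the vectors `X^{m,0}_{1,−1}`, `m ∈ ℤ`, form a basis of the quotient space `X / X̄`:
they are linearly independent and span the quotient. -/
theorem stmt_11 (G : ℤ → XSp →ₗ[ℚ] ℚ)
    (hG : ∀ (m a b : ℤ) (k l : OddZ),
      G m (Xb a b k l) =
        if a + b - (k : ℤ) - (l : ℤ) = m ∧ (k : ℤ) + (l : ℤ) = 0 then
          (((k : ℤ) - (l : ℤ) : ℤ) : ℚ)
        else if a + b - (k : ℤ) - (l : ℤ) = m ∧
            ((k : ℤ) + (l : ℤ) = 2 ∨ (k : ℤ) + (l : ℤ) = -2) then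
          (((l : ℤ) - (k : ℤ) : ℤ) : ℚ) / 2
        else 0) :
    LinearIndependent ℚ
      (fun m : ℤ =>
        Submodule.Quotient.mk (p := ⨅ m' : ℤ, LinearMap.ker (G m'))
          (Xb m 0 oneOdd negOneOdd)) ∧
    Submodule.span ℚ
      (Set.range fun m : ℤ =>
        Submodule.Quotient.mk (p := ⨅ m' : ℤ, LinearMap.ker (G m'))
          (Xb m 0 oneOdd negOneOdd)) = ⊤ := by
  classical
  -- G m x = phi x m
  have hGphi : ∀ (m : ℤ) (x : XSp), G m x = phi x m := by
    intro m x
    induction x using Finsupp.induction_linear with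
    | zero => simp
    | add f g hf hg => simp [map_add, hf, hg]
    | single p c =>
      obtain ⟨a, b, k, l⟩ := p
      have h1 : (Finsupp.single (a, b, k, l) c : XSp) = c • Xb a b k l := by
        simp [Xb, Finsupp.smul_single]
      rw [h1, map_smul, map_smul, hG, Xb, phi_single, mul_one]
      simp only [Finsupp.smul_apply, smul_eq_mul]
      congr 1
      rw [Finsupp.single_apply]
      dsimp only [idxP, coefP]
      split_ifs <;> first | rfl | tauto | simp_all
  have hker : ∀ x : XSp, x ∈ (⨅ m' : ℤ, LinearMap.ker (G m')) ↔ phi x = 0 := by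
    intro x
    simp only [Submodule.mem_iInf, LinearMap.mem_ker]
    constructor
    · intro h; ext m; rw [← hGphi]; exact h m
    · intro h m; rw [hGphi, h]; rfl
  constructor
  · rw [linearIndependent_iff']
    intro s g hsum i hi
    have hmem : (∑ j ∈ s, g j • Xb j 0 oneOdd negOneOdd) ∈
        (⨅ m' : ℤ, LinearMap.ker (G m')) := by
      rw [← Submodule.Quotient.mk_eq_zero]
      rw [← hsum]
      simp only [← Submodule.mkQ_apply, map_sum, map_smul]
    rw [hker] at hmem
    have := DFunLike.congr_fun hmem i
    simp only [map_sum, map_smul, phi_Xb] at this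
    rw [Finsupp.coe_zero, Pi.zero_apply] at this
    rw [Finsupp.finset_sum_apply] at this
    simp only [Finsupp.smul_apply, Finsupp.single_apply, smul_eq_mul] at this
    rw [Finset.sum_eq_single i (fun j _ hji => by simp [hji]) (fun h => absurd hi h)] at this
    simpa using this
  · rw [eq_top_iff]
    rintro q -
    obtain ⟨x, rfl⟩ := Submodule.Quotient.mk_surjective _ q
    set y : XSp := ∑ m ∈ (phi x).support, ((phi x m) / 2) • Xb m 0 oneOdd negOneOdd with hy
    have hphiy : phi y = phi x := by
      ext m'
      rw [hy]
      simp only [map_sum, map_smul, phi_Xb]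
      rw [Finsupp.finset_sum_apply]
      simp only [Finsupp.smul_apply, Finsupp.single_apply, smul_eq_mul]
      by_cases hm : m' ∈ (phi x).support
      · rw [Finset.sum_eq_single m' (fun j _ hji => by simp [hji]) (fun h => absurd hm h)]
        simp
      · rw [Finset.sum_eq_zero]
        · simp only [Finsupp.notMem_support_iff] at hm; rw [hm]
        · intro j hj
          have : j ≠ m' := fun h => hm (h ▸ hj)
          simp [this]
    have hxy : x - y ∈ (⨅ m' : ℤ, LinearMap.ker (G m')) := by
      rw [hker, map_sub, hphiy, sub_self]
    have : Submodule.Quotient.mk (p := ⨅ m' : ℤ, LinearMap.ker (G m')) x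
        = Submodule.Quotient.mk (p := ⨅ m' : ℤ, LinearMap.ker (G m')) y := by
      rw [Submodule.Quotient.eq]; exact hxy
    rw [this, hy]
    simp only [← Submodule.mkQ_apply, map_sum, map_smul]
    apply Submodule.sum_mem
    intro m _
    exact Submodule.smul_mem _ _ (Submodule.subset_span ⟨m, rfl⟩)
end
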